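/- arXiv:1311.2785 — 7 statements merged into one kernel-verified Lean document; each statement's English description precedes it below -/
import Mathlib

section
/- Suppose the multiset L admits a linear realization P = [x_0,…,x_{v−1}] on {0,…,v−1} in which the vertices v−1 and v−2 are adjacent (a special linear realization of type 1). Then for every positive integer b, the multiset L ∪ {2^b} (L with b extra copies of 2) admits a linear realization on {0,…,v−1+b} in which the two largest vertices are adjacent. -/
/-- Multiset of absolute differences of consecutive entries of a list. -/
def pathDiffs (l : List ℕ) : Multiset ℕ :=
  ↑(List.zipWith (fun x y => max x y - min x y) l l.tail)

/-- `l` is a linear realization of the multiset `L`: a permutation of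
`{0, …, |L|}` whose multiset of consecutive absolute differences is `L`. -/
def IsLinReal (L : Multiset ℕ) (l : List ℕ) : Prop :=
  l.Perm (List.range (Multiset.card L + 1)) ∧ pathDiffs l = L

/-- The cyclic edge-length `ℓ(x,y) = min(|x−y|, v−|x−y|)` in `K_v`. -/
def cycLen (v x y : ℕ) : ℕ := min (max x y - min x y) (v - (max x y - min x y))

def cycDiffs (v : ℕ) (l : List ℕ) : Multiset ℕ :=
  ↑(List.zipWith (cycLen v) l l.tail)

/-- `l` is a cyclic realization of `L`: a Hamiltonian path of `K_v` on
`{0, …, v−1}` (with `v = |L|+1`) whose multiset of cyclic edge-lengths is `L`. -/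
def IsCycReal (L : Multiset ℕ) (l : List ℕ) : Prop :=
  l.Perm (List.range (Multiset.card L + 1)) ∧
    cycDiffs (Multiset.card L + 1) l = L

/-- Vertices `a` and `b` are adjacent (consecutive, in either order) in the path `l`. -/
def AdjIn (a b : ℕ) (l : List ℕ) : Prop :=
  [a, b] <:+: l ∨ [b, a] <:+: l

/-- The endpoints of the path `l` are `0` and `1`. -/
def Ends01 (l : List ℕ) : Prop :=
  (l.head? = some 0 ∧ l.getLast? = some 1) ∨
    (l.head? = some 1 ∧ l.getLast? = some 0)

lemma pathDiffs_cons_cons (x y : ℕ) (t : List ℕ) :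
    pathDiffs (x :: y :: t) = (max x y - min x y) ::ₘ pathDiffs (y :: t) := rfl

lemma pathDiffs_single (x : ℕ) : pathDiffs [x] = 0 := rfl

lemma pathDiffs_append_cons (s : List ℕ) (x : ℕ) (t : List ℕ) :
    pathDiffs (s ++ x :: t) = pathDiffs (s ++ [x]) + pathDiffs (x :: t) := by
  induction s with
  | nil => simp [pathDiffs_single]
  | cons c s' ih =>
    cases s' with
    | nil => simp [pathDiffs_cons_cons, pathDiffs_single, Multiset.singleton_add]
    | cons c' s'' =>
      simp only [List.cons_append] at *
      rw [pathDiffs_cons_cons, pathDiffs_cons_cons, ih, Multiset.cons_add]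

lemma insert_perm (s t : List ℕ) (a c b : ℕ) :
    (s ++ a :: c :: b :: t).Perm (c :: (s ++ a :: b :: t)) := by
  have h1 := @List.perm_middle ℕ c (s ++ [a]) (b :: t)
  simpa using h1

lemma step_lemma (L : Multiset ℕ) (l : List ℕ) (h : IsLinReal L l)
    (hadj : AdjIn (Multiset.card L) (Multiset.card L - 1) l) :
    ∃ l', IsLinReal (L + {2}) l' ∧ AdjIn (Multiset.card L + 1) (Multiset.card L) l' := by
  set m := Multiset.card L with hm
  obtain ⟨hperm, hdiff⟩ := h
  have hlen : l.length = m + 1 := by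
    have := hperm.length_eq; simpa using this
  have key : ∀ a b : ℕ, ((a = m ∧ b = m - 1) ∨ (a = m - 1 ∧ b = m)) →
      [a, b] <:+: l →
      ∃ l', IsLinReal (L + {2}) l' ∧ AdjIn (m + 1) m l' := by
    intro a b hab hinf
    obtain ⟨s, t, hst⟩ := hinf
    have hm1 : 1 ≤ m := by
      have : 2 ≤ l.length := by rw [← hst]; simp; omega
      omega
    refine ⟨s ++ a :: (m + 1) :: b :: t, ⟨?_, ?_⟩, ?_⟩
    · -- permutation
      have hp1 : (s ++ a :: (m + 1) :: b :: t).Perm ((m + 1) :: l) := by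
        rw [← hst]; simpa using insert_perm s t a (m + 1) b
      have hp2 : ((m + 1) :: List.range (m + 1)).Perm (List.range (m + 1 + 1)) := by
        conv_rhs => rw [List.range_succ]
        exact (List.perm_append_singleton (m + 1) (List.range (m + 1))).symm
      have hc : Multiset.card (L + {2}) = m + 1 := by simp [hm]
      rw [hc]
      exact hp1.trans ((hperm.cons (m + 1)).trans hp2)
    · -- diffs
      have hL : pathDiffs (s ++ a :: b :: t) = L := by
        rw [← hst] at hdiff; simpa using hdiff
      rw [pathDiffs_append_cons s a ((m+1) :: b :: t),
        pathDiffs_cons_cons, pathDiffs_cons_cons]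
      rw [pathDiffs_append_cons s a (b :: t), pathDiffs_cons_cons] at hL
      set P := pathDiffs (b :: t) with hP
      have hd : (max a (m+1) - min a (m+1)) ::ₘ ((max (m+1) b - min (m+1) b) ::ₘ P)
          = 2 ::ₘ 1 ::ₘ P := by
        rcases hab with ⟨h1, h2⟩ | ⟨h1, h2⟩
        · subst h1; subst h2
          rw [show max m (m+1) - min m (m+1) = 1 by omega,
            show max (m+1) (m-1) - min (m+1) (m-1) = 2 by omega, Multiset.cons_swap]
        · subst h1; subst h2
          rw [show max (m-1) (m+1) - min (m-1) (m+1) = 2 by omega,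
            show max (m+1) m - min (m+1) m = 1 by omega]
      have he : max a b - min a b = 1 := by
        rcases hab with ⟨h1, h2⟩ | ⟨h1, h2⟩ <;> subst h1 <;> subst h2 <;> omega
      rw [hd]
      rw [he] at hL
      rw [← hL]
      rw [show (2:ℕ) ::ₘ 1 ::ₘ P = (1 ::ₘ P) + {2} by
        rw [add_comm, Multiset.singleton_add], ← add_assoc]
    · -- adjacency
      rcases hab with ⟨h1, h2⟩ | ⟨h1, h2⟩
      · right; subst h1; exact ⟨s, b :: t, by simp⟩
      · left; subst h2; exact ⟨s ++ [a], t, by simp⟩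
  rcases hadj with hinf | hinf
  · exact key _ _ (Or.inl ⟨rfl, rfl⟩) hinf
  · exact key _ _ (Or.inr ⟨rfl, rfl⟩) hinf

theorem stmt1 (L : Multiset ℕ) (l : List ℕ) (h : IsLinReal L l)
    (hadj : AdjIn (Multiset.card L) (Multiset.card L - 1) l) :
    ∀ b : ℕ, 1 ≤ b → ∃ l' : List ℕ,
      IsLinReal (L + Multiset.replicate b 2) l' ∧
      AdjIn (Multiset.card L + b) (Multiset.card L + b - 1) l' := by
  have main : ∀ b : ℕ, ∃ l' : List ℕ,
      IsLinReal (L + Multiset.replicate b 2) l' ∧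
      AdjIn (Multiset.card L + b) (Multiset.card L + b - 1) l' := by
    intro b
    induction b with
    | zero => exact ⟨l, by simpa using h, by simpa using hadj⟩
    | succ b ih =>
      obtain ⟨l', hr, ha⟩ := ih
      have hc : Multiset.card (L + Multiset.replicate b 2) = Multiset.card L + b := by simp
      obtain ⟨l'', hr'', ha''⟩ := step_lemma (L + Multiset.replicate b 2) l' hr
        (by rw [hc]; exact ha)
      refine ⟨l'', ?_, ?_⟩
      · have hrep : L + Multiset.replicate (b + 1) 2
            = (L + Multiset.replicate b 2) + {2} := by
          rw [Multiset.replicate_succ, ← Multiset.singleton_add]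
          rw [add_comm ({2} : Multiset ℕ) _, add_assoc]
        rw [hrep]; exact hr''
      · rw [hc] at ha''
        simpa [add_assoc] using ha''
  intro b _
  exact main b
end

section
/- For every even integer t ≥ 4 with t ≡ 0 (mod 4) and every integer k ≥ 0, the path obtained by the arithmetic progressions [0, 4, 8, …, 4k+4, then 4k+2, 4k−2, …, 2, then 3, 7, …, 4k+3, then 4k+1, 4k−3, …, 1] is a linear realization of the multiset {1, 2^2, 4^{4k+1}} on {0,…,4k+4} with endpoints 0 and 1. In particular, {1, 2^2, 4^{4k+1}} admits a special linear realization of type 2. -/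
lemma pathDiffs_cons_of_head (x y : ℕ) (s : List ℕ) (h : s.head? = some y) :
    pathDiffs (x :: s) = (max x y - min x y) ::ₘ pathDiffs s := by
  cases s with
  | nil => simp at h
  | cons a t => simp at h; subst h; rfl

lemma seg (f : ℕ → ℕ) (d : ℕ) :
    ∀ m t, (∀ i < m, max (f i) (f (i+1)) - min (f i) (f (i+1)) = d) →
    pathDiffs ((List.range (m+1)).map f ++ t)
      = Multiset.replicate m d + pathDiffs (f m :: t) := by
  intro m
  induction m with
  | zero => intro t _; simp [List.range_succ]
  | succ n ih =>
      intro t h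
      have : (List.range (n+2)).map f ++ t
          = (List.range (n+1)).map f ++ (f (n+1) :: t) := by
        rw [List.range_succ (n := n+1)]; simp
      rw [this, ih (f (n+1) :: t) (fun i hi => h i (by omega)),
        pathDiffs_cons_cons, h n (by omega)]
      rw [Multiset.replicate_succ]
      simp [Multiset.add_cons]

theorem stmt4 (k : ℕ) :
    ∃ l : List ℕ,
      l = (List.range (k+2)).map (fun i => 4*i) ++
          (List.range (k+1)).map (fun i => 4*k+2 - 4*i) ++
          (List.range (k+1)).map (fun i => 3 + 4*i) ++
          (List.range (k+1)).map (fun i => 4*k+1 - 4*i) ∧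
      IsLinReal ({1} + Multiset.replicate 2 2 + Multiset.replicate (4*k+1) 4) l ∧
      Ends01 l := by
  set A := (List.range (k+2)).map (fun i => 4*i) with hA
  set B := (List.range (k+1)).map (fun i => 4*k+2 - 4*i) with hB
  set C := (List.range (k+1)).map (fun i => 3 + 4*i) with hC
  set D := (List.range (k+1)).map (fun i => 4*k+1 - 4*i) with hD
  refine ⟨A ++ B ++ C ++ D, rfl, ⟨?_, ?_⟩, ?_⟩
  · -- permutation
    have hcard : Multiset.card ({1} + Multiset.replicate 2 2 +
        Multiset.replicate (4*k+1) 4) = 4*k+4 := by simp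
    rw [hcard]
    -- membership facts
    have hAm : ∀ x ∈ A, x % 4 = 0 ∧ x ≤ 4*k+4 := by
      intro x hx; rw [hA] at hx; simp only [List.mem_map, List.mem_range] at hx
      obtain ⟨i, hi, rfl⟩ := hx; omega
    have hBm : ∀ x ∈ B, x % 4 = 2 ∧ x ≤ 4*k+2 := by
      intro x hx; rw [hB] at hx; simp only [List.mem_map, List.mem_range] at hx
      obtain ⟨i, hi, rfl⟩ := hx; omega
    have hCm : ∀ x ∈ C, x % 4 = 3 ∧ x ≤ 4*k+3 := by
      intro x hx; rw [hC] at hx; simp only [List.mem_map, List.mem_range] at hx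
      obtain ⟨i, hi, rfl⟩ := hx; omega
    have hDm : ∀ x ∈ D, x % 4 = 1 ∧ x ≤ 4*k+1 := by
      intro x hx; rw [hD] at hx; simp only [List.mem_map, List.mem_range] at hx
      obtain ⟨i, hi, rfl⟩ := hx; omega
    have hnd : (A ++ B ++ C ++ D).Nodup := by
      rw [List.append_assoc, List.append_assoc, List.nodup_append,
        List.nodup_append, List.nodup_append]
      refine ⟨?_, ⟨?_, ⟨?_, ?_, ?_⟩, ?_⟩, ?_⟩
      · exact (List.nodup_range).map_on (by intro x hx y hy h; omega)
      · exact (List.nodup_range).map_on (by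
          intro x hx y hy h
          simp only [List.mem_range] at hx hy; omega)
      · exact (List.nodup_range).map_on (by intro x hx y hy h; omega)
      · exact (List.nodup_range).map_on (by
          intro x hx y hy h
          simp only [List.mem_range] at hx hy; omega)
      · rintro x hx _ hy rfl
        have := (hCm x hx).1; have := (hDm x hy).1; omega
      · rintro x hx _ hy rfl
        have h1 := (hBm x hx).1
        rcases List.mem_append.1 hy with h | h
        · have := (hCm x h).1; omega
        · have := (hDm x h).1; omega
      · rintro x hx _ hy rfl
        have h1 := (hAm x hx).1
        rcases List.mem_append.1 hy with h | h
        · have := (hBm x h).1; omega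
        rcases List.mem_append.1 h with h | h
        · have := (hCm x h).1; omega
        · have := (hDm x h).1; omega
    have hsub : (A ++ B ++ C ++ D) ⊆ List.range (4*k+4+1) := by
      intro x hx
      rw [List.mem_range]
      rcases List.mem_append.1 hx with h | h
      · rcases List.mem_append.1 h with h | h
        · rcases List.mem_append.1 h with h | h
          · have := (hAm x h).2; omega
          · have := (hBm x h).2; omega
        · have := (hCm x h).2; omega
      · have := (hDm x h).2; omega
    refine (hnd.subperm hsub).perm_of_length_le ?_
    simp [hA, hB, hC, hD]
    omega
  · -- pathDiffs
    rw [List.append_assoc, List.append_assoc, hA,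
      seg _ 4 (k+1) _ (by intro i hi; omega)]
    have h1 : (B ++ (C ++ D)).head? = some (4*k+2) := by
      rw [hB, List.range_succ_eq_map]; simp
    rw [pathDiffs_cons_of_head _ _ _ h1]
    rw [hB, seg _ 4 k _ (by intro i hi; omega)]
    have e2 : 4*k+2 - 4*k = 2 := by omega
    simp only [e2]
    have h2 : (C ++ D).head? = some 3 := by
      rw [hC, List.range_succ_eq_map]; simp
    rw [pathDiffs_cons_of_head _ _ _ h2]
    rw [hC, show D = D ++ [] by simp, hD,
      seg _ 4 k _ (by intro i hi; omega)]
    have h3 : ((List.range (k+1)).map (fun i => 4*k+1 - 4*i) ++ ([] : List ℕ)).head?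
        = some (4*k+1) := by
      rw [List.range_succ_eq_map]; simp
    rw [pathDiffs_cons_of_head _ _ _ h3]
    rw [seg _ 4 k _ (by intro i hi; omega)]
    have e4 : 4*k+1 - 4*k = 1 := by omega
    simp only [e4]
    have : pathDiffs [1] = 0 := rfl
    rw [this]
    ext a
    simp only [Multiset.count_add, Multiset.count_cons, Multiset.count_replicate,
      Multiset.count_singleton, Multiset.count_zero]
    split_ifs <;> omega
  · -- Ends01
    left
    constructor
    · rw [List.append_assoc, List.append_assoc, hA, List.range_succ_eq_map]
      simp
    · rw [List.getLast?_append, hD, List.range_succ]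
      have e : 4*k+1 - 4*k = 1 := by omega
      simp [e]
end

section
/- For every even integer t ≥ 4 with t ≡ 0 (mod 4), the sequence [0, t, t−2, t−4, …, 2, 3, 5, …, t+1, 1] is a linear realization of {1, 2^{t−2}, t^2} on {0,…,t+1} with endpoints 0 and 1 (special of type 2). -/
lemma zip_aux (f : ℕ → ℕ → ℕ) (l1 : List ℕ) (a : ℕ) (l2 : List ℕ) :
    List.zipWith f (l1 ++ a :: l2) (l1 ++ a :: l2).tail =
      List.zipWith f (l1 ++ [a]) (l1 ++ [a]).tail ++ List.zipWith f (a :: l2) l2 := by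
  induction l1 with
  | nil => simp
  | cons x l1 ih =>
    cases l1 with
    | nil => simp
    | cons y l1' => simpa using ih

lemma pd_append (l1 : List ℕ) (a : ℕ) (l2 : List ℕ) :
    pathDiffs (l1 ++ a :: l2) = pathDiffs (l1 ++ [a]) + pathDiffs (a :: l2) := by
  unfold pathDiffs
  rw [zip_aux, Multiset.coe_add]; rfl

lemma pd_pair (a b : ℕ) : pathDiffs [a, b] = {max a b - min a b} := rfl

lemma pd_map (f : ℕ → ℕ) (d : ℕ) :
    ∀ n, (∀ i, i + 1 < n → max (f i) (f (i+1)) - min (f i) (f (i+1)) = d) →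
      pathDiffs ((List.range n).map f) = Multiset.replicate (n - 1) d
  | 0, _ => rfl
  | 1, _ => rfl
  | (n+2), h => by
    have ih := pd_map f d (n+1) (fun i hi => h i (by omega))
    rw [List.range_succ, List.map_append, List.range_succ, List.map_append,
      List.append_assoc]
    rw [show List.map f [n] ++ List.map f [n+1] = f n :: [f (n+1)] from rfl]
    rw [pd_append,
      show List.map f (List.range n) ++ [f n] = List.map f (List.range (n+1)) by
        rw [List.range_succ]; simp,
      ih, pd_pair, h n (by omega)]
    rw [show (n+2) - 1 = (n+1-1) + 1 from rfl]
    rw [Multiset.replicate_succ]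
    rw [← Multiset.singleton_add, add_comm]

lemma diff_eq (a b : ℕ) : max a b - min a b = (a - b) + (b - a) := by
  rcases le_total a b with h | h <;>
    simp [max_eq_right, max_eq_left, min_eq_left, min_eq_right, h] <;> omega

lemma pd_pair' (a b c : ℕ) (h : (a - b) + (b - a) = c) : pathDiffs [a, b] = {c} := by
  rw [pd_pair, diff_eq, h]

lemma pd_main (t m : ℕ) (hm : t = 2*m + 4) :
    pathDiffs ([0] ++ (List.range (m+2)).map (fun i => t - 2*i) ++
        (List.range (m+2)).map (fun i => 3 + 2*i) ++ [1]) =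
      ({1} + Multiset.replicate (t-2) 2 + Multiset.replicate 2 t) := by
  set f : ℕ → ℕ := fun i => t - 2*i with hf
  set g : ℕ → ℕ := fun i => 3 + 2*i with hg
  have hfA : (List.range (m+2)).map f = (List.range (m+1)).map f ++ [2] := by
    rw [List.range_succ, List.map_append]
    simp only [List.map_cons, List.map_nil, hf]
    rw [show t - 2*(m+1) = 2 by omega]
  have hfhead : (List.range (m+2)).map f = t :: (List.range (m+1)).map (fun i => f (i+1)) := by
    rw [List.range_succ_eq_map, List.map_cons, List.map_map]
    congr 1
  have hgB : (List.range (m+2)).map g = (List.range (m+1)).map g ++ [t+1] := by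
    rw [List.range_succ, List.map_append]
    simp only [List.map_cons, List.map_nil, hg]
    rw [show 3 + 2*(m+1) = t+1 by omega]
  have hghead : (List.range (m+2)).map g = 3 :: (List.range (m+1)).map (fun i => g (i+1)) := by
    rw [List.range_succ_eq_map, List.map_cons, List.map_map]
    congr 1
  have pA : pathDiffs ((List.range (m+2)).map f) = Multiset.replicate (m+1) 2 := by
    have := pd_map f 2 (m+2) (by
      intro i hi
      rw [diff_eq]
      simp only [hf]
      omega)
    simpa using this
  have pB : pathDiffs ((List.range (m+2)).map g) = Multiset.replicate (m+1) 2 := by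
    have := pd_map g 2 (m+2) (by
      intro i hi
      rw [diff_eq]
      simp only [hg]
      omega)
    simpa using this
  have e : ([0] ++ (List.range (m+2)).map f) ++ (List.range (m+2)).map g ++ [1]
      = ([0] ++ (List.range (m+1)).map f) ++ 2 :: ((List.range (m+2)).map g ++ [1]) := by
    rw [hfA]; simp
  rw [e, pd_append ([0] ++ (List.range (m+1)).map f) 2 ((List.range (m+2)).map g ++ [1])]
  have e1 : ([0] ++ (List.range (m+1)).map f) ++ [2] = [0] ++ (List.range (m+2)).map f := by
    rw [hfA]; simp
  rw [e1, hfhead, pd_append [0] t ((List.range (m+1)).map (fun i => f (i+1))), ← hfhead, pA]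
  have e2 : (2 : ℕ) :: ((List.range (m+2)).map g ++ [1])
      = [2] ++ 3 :: ((List.range (m+1)).map (fun i => g (i+1)) ++ [1]) := by
    rw [hghead]; simp
  rw [e2, pd_append [2] 3 ((List.range (m+1)).map (fun i => g (i+1)) ++ [1])]
  have e4 : (3 : ℕ) :: ((List.range (m+1)).map (fun i => g (i+1)) ++ [1])
      = ((List.range (m+1)).map g ++ ((t+1) :: [1])) := by
    rw [← List.cons_append, ← hghead, hgB, List.append_assoc]
    simp
  rw [e4, pd_append ((List.range (m+1)).map g) (t+1) [1], ← hgB, pB]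
  rw [show ([0] ++ [t] : List ℕ) = [0, t] from rfl,
    show ([2] ++ [3] : List ℕ) = [2, 3] from rfl]
  rw [pd_pair' 0 t t (by omega), pd_pair' 2 3 1 (by omega), pd_pair' (t+1) 1 t (by omega)]
  have hrep : Multiset.replicate (t-2) 2
      = Multiset.replicate (m+1) 2 + Multiset.replicate (m+1) 2 := by
    rw [← Multiset.replicate_add]
    congr 1
    omega
  have hrep2 : Multiset.replicate 2 t = ({t} : Multiset ℕ) + {t} := rfl
  rw [hrep, hrep2]
  abel

theorem stmt7 (t : ℕ) (h4 : 4 ≤ t) (hmod : t % 4 = 0) :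
    ∃ l : List ℕ,
      l = [0] ++ (List.range (t/2)).map (fun i => t - 2*i) ++
          (List.range (t/2)).map (fun i => 3 + 2*i) ++ [1] ∧
      IsLinReal ({1} + Multiset.replicate (t-2) 2 + Multiset.replicate 2 t) l ∧
      Ends01 l := by
  obtain ⟨m, hm⟩ : ∃ m, t = 2*m + 4 := ⟨(t-4)/2, by omega⟩
  have ht2 : t/2 = m + 2 := by omega
  refine ⟨_, rfl, ⟨?_, ?_⟩, ?_⟩
  · -- permutation
    have hcard : Multiset.card ({1} + Multiset.replicate (t-2) 2 + Multiset.replicate 2 t) + 1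
        = t + 2 := by simp; omega
    rw [hcard, ht2]
    have hAnd : ((List.range (m+2)).map (fun i => t - 2*i)).Nodup := by
      refine List.Nodup.map_on ?_ List.nodup_range
      intro x hx y hy hxy
      simp only [List.mem_range] at hx hy
      omega
    have hBnd : ((List.range (m+2)).map (fun i => 3 + 2*i)).Nodup := by
      refine List.Nodup.map_on ?_ List.nodup_range
      intro x hx y hy hxy
      simp only [List.mem_range] at hx hy
      omega
    have hnodup : ([0] ++ (List.range (m+2)).map (fun i => t - 2*i) ++
          (List.range (m+2)).map (fun i => 3 + 2*i) ++ [1]).Nodup := by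
      rw [List.nodup_append, List.nodup_append, List.nodup_append]
      refine ⟨⟨⟨List.nodup_singleton _, hAnd, ?_⟩, hBnd, ?_⟩, List.nodup_singleton _, ?_⟩
      · intro a ha b hb rfl
        simp only [List.mem_singleton] at ha
        simp only [List.mem_map, List.mem_range] at hb
        obtain ⟨i, hi, hie⟩ := hb
        omega
      · intro a ha b hb rfl
        simp only [List.mem_append, List.mem_singleton, List.mem_map, List.mem_range] at ha hb
        obtain ⟨j, hj, hje⟩ := hb
        rcases ha with h | ⟨i, hi, hie⟩ <;> omega
      · intro a ha b hb rfl
        simp only [List.mem_singleton] at hb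
        simp only [List.mem_append, List.mem_singleton, List.mem_map, List.mem_range] at ha
        rcases ha with (h | ⟨i, hi, hie⟩) | ⟨i, hi, hie⟩ <;> omega
    have hsub : ([0] ++ (List.range (m+2)).map (fun i => t - 2*i) ++
          (List.range (m+2)).map (fun i => 3 + 2*i) ++ [1]) ⊆ List.range (t+2) := by
      intro x hx
      simp only [List.mem_append, List.mem_map, List.mem_range, List.mem_singleton] at hx
      rw [List.mem_range]
      rcases hx with ((h | ⟨i, hi, rfl⟩) | ⟨i, hi, rfl⟩) | h <;> omega
    have hlen : (List.range (t+2)).length ≤ ([0] ++ (List.range (m+2)).map (fun i => t - 2*i) ++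
          (List.range (m+2)).map (fun i => 3 + 2*i) ++ [1]).length := by
      simp only [List.length_append, List.length_map, List.length_range, List.length_singleton]
      omega
    exact (List.subperm_of_subset hnodup hsub).perm_of_length_le hlen
  · rw [ht2]
    exact pd_main t m hm
  · left
    constructor
    · rfl
    · exact List.getLast?_concat
end

section
/- For every even integer t ≥ 6 with t ≡ 2 (mod 4), the sequence [0, t, t−2, …, 2, t+2, t+1, t−1, t−3, …, 1] is a linear realization of {1, 2^{t−1}, t^2} on {0,…,t+2} which is special of type 1 (t+2 and t+1 adjacent) and of type 2 (endpoints 0 and 1). -/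
def dL (n a : ℕ) : List ℕ := (List.range n).map (fun i => a - 2*i)

lemma dL_succ (n a : ℕ) : dL (n+1) a = a :: dL n (a-2) := by
  unfold dL
  rw [List.range_succ_eq_map, List.map_cons, List.map_map]
  refine congrArg₂ _ (by omega) (List.map_congr_left fun i _ => ?_)
  simp only [Function.comp_apply]
  omega

lemma dL_length (n a : ℕ) : (dL n a).length = n := by simp [dL]

lemma pathDiffs_cons (a b : ℕ) (l : List ℕ) :
    pathDiffs (a :: b :: l) = (max a b - min a b) ::ₘ pathDiffs (b :: l) := rfl

lemma pathDiffs_append (l1 l2 : List ℕ) (b : ℕ) :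
    pathDiffs (l1 ++ b :: l2) = pathDiffs (l1 ++ [b]) + pathDiffs (b :: l2) := by
  induction l1 with
  | nil => simp [pathDiffs]
  | cons a l1 ih =>
    cases l1 with
    | nil => simp [pathDiffs_cons, pathDiffs]
    | cons c l1 =>
      simp only [List.cons_append, pathDiffs_cons] at *
      rw [ih]
      rw [Multiset.cons_add]

lemma pathDiffs_dL (n a : ℕ) (h : 2*n ≤ a) :
    pathDiffs (dL (n+1) a) = Multiset.replicate n 2 := by
  induction n generalizing a with
  | zero => show pathDiffs [a - 2*0] = _; simp [pathDiffs]
  | succ n ih =>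
    rw [dL_succ, dL_succ, pathDiffs_cons, ← dL_succ, ih (a-2) (by omega)]
    rw [Multiset.replicate_succ]
    congr 1
    omega

lemma dL_head (n a : ℕ) : dL (n+1) a = a :: (dL (n+1) a).tail := by
  rw [dL_succ]; rfl

lemma pathDiffs_dL_snoc (n a c : ℕ) (h : 2*n ≤ a) :
    pathDiffs (dL (n+1) a ++ [c]) =
      Multiset.replicate n 2 + {max (a - 2*n) c - min (a - 2*n) c} := by
  induction n generalizing a with
  | zero =>
    show pathDiffs [a - 2*0, c] = _
    simp [pathDiffs]
  | succ n ih =>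
    rw [dL_succ, dL_succ, List.cons_append, List.cons_append, pathDiffs_cons,
      ← List.cons_append, ← dL_succ, ih (a-2) (by omega)]
    rw [show max a (a-2) - min a (a-2) = 2 by omega]
    rw [show a - 2 - 2*n = a - 2*(n+1) by omega, Multiset.replicate_succ, Multiset.cons_add]

lemma dL_getLast? (n a : ℕ) : (dL (n+1) a).getLast? = some (a - 2*n) := by
  induction n generalizing a with
  | zero => show (dL 1 a).getLast? = _; rw [show dL 1 a = [a - 2*0] from rfl]; rfl
  | succ n ih =>
    rw [dL_succ, List.getLast?_cons]
    rw [dL_succ]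
    rw [← dL_succ, ih (a-2)]
    simp; omega

lemma mem_dL {x n a : ℕ} : x ∈ dL n a ↔ ∃ i, i < n ∧ x = a - 2*i := by
  simp [dL, List.mem_range, eq_comm]

lemma dL_nodup (n a : ℕ) (h : 2*n ≤ a + 2) : (dL n a).Nodup := by
  apply List.Nodup.map_on _ List.nodup_range
  intro x hx y hy hxy
  simp only [List.mem_range] at hx hy
  omega

theorem stmt8 (t : ℕ) (h6 : 6 ≤ t) (hmod : t % 4 = 2) :
    ∃ l : List ℕ,
      l = [0] ++ (List.range (t/2)).map (fun i => t - 2*i) ++ [t+2, t+1] ++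
          (List.range (t/2)).map (fun i => t - 1 - 2*i) ∧
      IsLinReal ({1} + Multiset.replicate (t-1) 2 + Multiset.replicate 2 t) l ∧
      AdjIn (t+2) (t+1) l ∧ Ends01 l := by
  obtain ⟨k, hk1, hk2, hk3⟩ : ∃ k, t / 2 = k + 1 ∧ t = 2 * (k + 1) ∧ 2 ≤ k :=
    ⟨t/2 - 1, by omega, by omega, by omega⟩
  have hmap1 : (List.range (t/2)).map (fun i => t - 2*i) = dL (k+1) t := by rw [hk1]; rfl
  have hmap2 : (List.range (t/2)).map (fun i => t - 1 - 2*i) = dL (k+1) (t-1) := by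
    rw [hk1]; rfl
  refine ⟨[0] ++ dL (k+1) t ++ [t+2, t+1] ++ dL (k+1) (t-1),
    by rw [hmap1, hmap2], ⟨?_, ?_⟩, ?_, ?_⟩
  · -- permutation
    have hcard : Multiset.card ({1} + Multiset.replicate (t-1) 2 + Multiset.replicate 2 t) + 1
        = t + 3 := by
      simp [Multiset.card_replicate]; omega
    rw [hcard]
    have hnd : ([0] ++ dL (k+1) t ++ [t+2, t+1] ++ dL (k+1) (t-1)).Nodup := by
      rw [show ([0] ++ dL (k+1) t ++ [t+2, t+1] ++ dL (k+1) (t-1))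
          = 0 :: (dL (k+1) t ++ (t+2) :: (t+1) :: dL (k+1) (t-1)) by simp]
      rw [List.nodup_cons, List.nodup_append, List.nodup_cons, List.nodup_cons]
      refine ⟨?_, dL_nodup _ _ (by omega), ⟨?_, ?_, dL_nodup _ _ (by omega)⟩, ?_⟩
      · simp only [List.mem_append, List.mem_cons, mem_dL, List.not_mem_nil]
        rintro (⟨i, hi, h⟩ | h | h | ⟨i, hi, h⟩) <;> omega
      · simp only [List.mem_cons, mem_dL, List.not_mem_nil]
        rintro (h | ⟨i, hi, h⟩) <;> omega
      · simp only [mem_dL]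
        rintro ⟨i, hi, h⟩; omega
      · intro a ha b hb hab
        subst hab
        rw [mem_dL] at ha
        simp only [List.mem_cons, mem_dL] at hb
        obtain ⟨i, hi, rfl⟩ := ha
        rcases hb with h | h | ⟨j, hj, h⟩ <;> omega
    apply List.Subperm.perm_of_length_le
    · apply List.subperm_of_subset hnd
      intro x hx
      rw [List.mem_range]
      simp only [List.mem_append, List.mem_cons, mem_dL, List.not_mem_nil,
        List.mem_singleton, or_false] at hx
      rcases hx with ((h | ⟨i, hi, h⟩) | h | h) | ⟨i, hi, h⟩ <;> omega
    · simp [dL_length]; omega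
  · -- pathDiffs
    rw [show ([0] ++ dL (k+1) t ++ [t+2, t+1] ++ dL (k+1) (t-1))
        = (0 :: dL (k+1) t) ++ (t+2) :: ((t+1) :: dL (k+1) (t-1)) by simp]
    rw [pathDiffs_append]
    have e2 : pathDiffs ((0 :: dL (k+1) t) ++ [t+2])
        = t ::ₘ (Multiset.replicate k 2 + {t}) := by
      rw [dL_succ, List.cons_append, List.cons_append, pathDiffs_cons,
        ← List.cons_append, ← dL_succ, pathDiffs_dL_snoc k t (t+2) (by omega)]
      rw [show max 0 t - min 0 t = t by omega,
        show max (t - 2*k) (t+2) - min (t - 2*k) (t+2) = t by omega]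
    have e3 : pathDiffs ((t+2) :: (t+1) :: dL (k+1) (t-1))
        = 1 ::ₘ 2 ::ₘ Multiset.replicate k 2 := by
      rw [pathDiffs_cons, dL_succ, pathDiffs_cons, ← dL_succ,
        pathDiffs_dL k (t-1) (by omega)]
      rw [show max (t+2) (t+1) - min (t+2) (t+1) = 1 by omega,
        show max (t+1) (t-1) - min (t+1) (t-1) = 2 by omega]
    rw [e2, e3]
    rw [show t - 1 = k + (k + 1) by omega, Multiset.replicate_add, Multiset.replicate_succ,
      show (Multiset.replicate 2 t : Multiset ℕ) = t ::ₘ t ::ₘ 0 from rfl]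
    simp only [← Multiset.singleton_add]
    abel
  · -- AdjIn
    exact Or.inl ⟨[0] ++ dL (k+1) t, dL (k+1) (t-1), by simp⟩
  · -- Ends01
    refine Or.inl ⟨rfl, ?_⟩
    have hBne : dL (k+1) (t-1) ≠ [] := by rw [dL_succ]; simp
    rw [List.getLast?_append_of_ne_nil _ hBne, dL_getLast?]
    rw [show t - 1 - 2*k = 1 by omega]
end

section
/- For every even integer t ≥ 4 and all positive integers a, b, c with a ≥ 2 and a + b = t − 1, the multiset {1^a, 2^b, t^c} (a copies of 1, b copies of 2, c copies of t) admits a linear realization, i.e., there is a permutation of {0,…,a+b+c} whose multiset of consecutive absolute differences equals {1^a, 2^b, t^c}. -/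
namespace S9

def dd (x y : ℕ) : ℕ := max x y - min x y

lemma dd_comm (x y : ℕ) : dd x y = dd y x := by unfold dd; omega

lemma dd_add (x y m : ℕ) : dd (x+m) (y+m) = dd x y := by unfold dd; omega

lemma pd_nil : pathDiffs [] = 0 := rfl

lemma pd_single (x : ℕ) : pathDiffs [x] = 0 := rfl

lemma pd_cons_cons (x y : ℕ) (l : List ℕ) :
    pathDiffs (x :: y :: l) = dd x y ::ₘ pathDiffs (y :: l) := rfl

lemma pd_concat : ∀ (l : List ℕ) (x y : ℕ), l.getLast? = some x →
    pathDiffs (l ++ [y]) = pathDiffs l + {dd x y}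
  | [], x, y, h => by simp at h
  | [z], x, y, h => by
      simp at h
      subst h
      simp [pd_cons_cons, pd_single, pd_nil]
  | z :: z' :: l, x, y, h => by
      have h' : (z' :: l).getLast? = some x := by
        rw [← h]; exact (List.getLast?_cons_cons ..).symm
      have ih := pd_concat (z' :: l) x y h'
      calc pathDiffs ((z :: z' :: l) ++ [y])
          = dd z z' ::ₘ pathDiffs ((z' :: l) ++ [y]) := rfl
        _ = dd z z' ::ₘ (pathDiffs (z' :: l) + {dd x y}) := by rw [ih]
        _ = (dd z z' ::ₘ pathDiffs (z' :: l)) + {dd x y} := (Multiset.cons_add _ _ _).symm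
        _ = pathDiffs (z :: z' :: l) + {dd x y} := by rw [pd_cons_cons]

lemma pd_middle : ∀ (l₁ : List ℕ) (y : ℕ) (l₂ : List ℕ),
    pathDiffs (l₁ ++ y :: l₂) = pathDiffs (l₁ ++ [y]) + pathDiffs (y :: l₂)
  | [], y, l₂ => by simp [pd_single, pd_nil]
  | [x], y, l₂ => by
      calc pathDiffs ([x] ++ y :: l₂) = dd x y ::ₘ pathDiffs (y :: l₂) := rfl
        _ = (dd x y ::ₘ 0) + pathDiffs (y :: l₂) := by rw [Multiset.cons_add, zero_add]
        _ = pathDiffs ([x] ++ [y]) + pathDiffs (y :: l₂) := rfl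
  | x :: x' :: l₁, y, l₂ => by
      have ih := pd_middle (x' :: l₁) y l₂
      calc pathDiffs ((x :: x' :: l₁) ++ y :: l₂)
          = dd x x' ::ₘ pathDiffs ((x' :: l₁) ++ y :: l₂) := rfl
        _ = dd x x' ::ₘ (pathDiffs ((x' :: l₁) ++ [y]) + pathDiffs (y :: l₂)) := by rw [ih]
        _ = (dd x x' ::ₘ pathDiffs ((x' :: l₁) ++ [y])) + pathDiffs (y :: l₂) :=
            (Multiset.cons_add _ _ _).symm
        _ = pathDiffs ((x :: x' :: l₁) ++ [y]) + pathDiffs (y :: l₂) := rfl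

lemma pd_append (l₁ l₂ : List ℕ) (x y : ℕ) (h₁ : l₁.getLast? = some x)
    (h₂ : l₂.head? = some y) :
    pathDiffs (l₁ ++ l₂) = pathDiffs l₁ + {dd x y} + pathDiffs l₂ := by
  cases l₂ with
  | nil => simp at h₂
  | cons z l₂ =>
      simp only [List.head?_cons, Option.some.injEq] at h₂
      rw [← h₂, pd_middle, pd_concat l₁ x z h₁, add_assoc]

lemma pd_reverse : ∀ l : List ℕ, pathDiffs l.reverse = pathDiffs l
  | [] => rfl
  | [x] => rfl
  | x :: z :: t => by
      have hgl : (z :: t).reverse.getLast? = some z := by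
        rw [List.getLast?_reverse]; rfl
      calc pathDiffs (x :: z :: t).reverse
          = pathDiffs ((z :: t).reverse ++ [x]) := by rw [List.reverse_cons]
        _ = pathDiffs (z :: t).reverse + {dd z x} := pd_concat _ z x hgl
        _ = pathDiffs (z :: t) + {dd x z} := by rw [pd_reverse (z :: t), dd_comm]
        _ = {dd x z} + pathDiffs (z :: t) := add_comm _ _
        _ = dd x z ::ₘ pathDiffs (z :: t) := by rw [Multiset.singleton_add]
        _ = pathDiffs (x :: z :: t) := (pd_cons_cons ..).symm

lemma pd_map (f : ℕ → ℕ) : ∀ (l : List ℕ),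
    (∀ x ∈ l, ∀ y ∈ l, dd (f x) (f y) = dd x y) → pathDiffs (l.map f) = pathDiffs l
  | [], _ => rfl
  | [x], _ => rfl
  | x :: z :: t, hf => by
      have ih := pd_map f (z :: t) (fun u hu v hv =>
        hf u (List.mem_cons_of_mem _ hu) v (List.mem_cons_of_mem _ hv))
      calc pathDiffs ((x :: z :: t).map f)
          = dd (f x) (f z) ::ₘ pathDiffs ((z :: t).map f) := rfl
        _ = dd x z ::ₘ pathDiffs (z :: t) := by
            rw [ih, hf x (by simp) z (by simp)]
        _ = pathDiffs (x :: z :: t) := (pd_cons_cons ..).symm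

/-- Arithmetic progression list. -/
def run (x e n : ℕ) : List ℕ := (List.range n).map (fun i => x + e * i)

lemma run_zero (x e : ℕ) : run x e 0 = [] := rfl

lemma run_succ (x e n : ℕ) : run x e (n+1) = run x e n ++ [x + e * n] := by
  simp [run, List.range_succ]

lemma run_succ' (x e n : ℕ) : run x e (n+1) = x :: run (x+e) e n := by
  unfold run
  rw [List.range_succ_eq_map, List.map_cons, List.map_map]
  simp only [mul_zero, add_zero]
  congr 1
  exact List.map_congr_left (fun i _ => by simp only [Function.comp_apply, Nat.succ_eq_add_one]; ring)

lemma run_ne_nil (x e n : ℕ) (h : 1 ≤ n) : run x e n ≠ [] := by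
  cases n with
  | zero => omega
  | succ m => rw [run_succ']; exact List.cons_ne_nil _ _

lemma run_head? (x e n : ℕ) (h : 1 ≤ n) : (run x e n).head? = some x := by
  cases n with
  | zero => omega
  | succ m => rw [run_succ']; rfl

lemma run_getLast? (x e n : ℕ) (h : 1 ≤ n) : (run x e n).getLast? = some (x + e * (n-1)) := by
  cases n with
  | zero => omega
  | succ m =>
      rw [run_succ, List.getLast?_append_cons]
      simp

lemma pd_run (e : ℕ) : ∀ (n x : ℕ), pathDiffs (run x e n) = Multiset.replicate (n-1) e
  | 0, x => rfl
  | 1, x => rfl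
  | (n+2), x => by
      have ih := pd_run e (n+1) (x+e)
      rw [run_succ' x e (n+1)]
      rw [show run (x+e) e (n+1) = (x+e) :: run (x+e+e) e n from run_succ' _ _ _]
      rw [pd_cons_cons, ← run_succ' (x+e) e n, ih]
      have : dd x (x+e) = e := by unfold dd; omega
      rw [this]
      rfl

/-- Interleaving evens and odds gives a range (as multisets). -/
lemma interleave : ∀ n : ℕ,
    ((run 0 2 ((n+1)/2) : List ℕ) : Multiset ℕ) + (run 1 2 (n/2) : List ℕ) =
      (List.range n : List ℕ) := by
  intro n
  induction n with
  | zero => rfl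
  | succ n ih =>
      rcases Nat.mod_two_eq_zero_or_one n with h | h
      · rw [show (n+1+1)/2 = n/2 + 1 by omega, show (n+1)/2 = n/2 by omega,
          run_succ 0 2 (n/2), List.range_succ, ← Multiset.coe_add, ← Multiset.coe_add,
          show 0 + 2*(n/2) = n by omega, add_right_comm]
        rw [show (n+1)/2 = n/2 by omega] at ih
        rw [ih]
      · rw [show (n+1+1)/2 = n/2 + 1 by omega, show (n+1)/2 = n/2 + 1 by omega,
          run_succ 1 2 (n/2), List.range_succ, ← Multiset.coe_add, ← Multiset.coe_add,
          show 1 + 2*(n/2) = n by omega, ← add_assoc]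
        rw [show (n+1)/2 = n/2 + 1 by omega] at ih
        rw [ih]

lemma run_shift (x y e n : ℕ) :
    (run y e n).map (fun z => x + z) = run (x + y) e n := by
  unfold run
  rw [List.map_map]
  exact List.map_congr_left (fun i _ => by simp only [Function.comp_apply]; ring)

/-- range n + shifted range m = range (n+m), as multisets. -/
lemma range_add_coe (n m : ℕ) :
    ((List.range n : List ℕ) : Multiset ℕ) + ((List.range m).map (fun z => n + z) : List ℕ) =
      (List.range (n+m) : List ℕ) := by
  rw [List.range_add, ← Multiset.coe_add]

/-- Reversal map on range, multiset version. -/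
lemma rev_range_coe : ∀ n : ℕ,
    (((List.range n).map (fun z => n - 1 - z) : List ℕ) : Multiset ℕ) = (List.range n : List ℕ)
  | 0 => rfl
  | (n+1) => by
      have hfn : (fun z => n + 1 - 1 - z) ∘ Nat.succ = (fun z => n - 1 - z) := by
        funext z; simp only [Function.comp_apply]; omega
      calc (((List.range (n+1)).map (fun z => n + 1 - 1 - z) : List ℕ) : Multiset ℕ)
          = ↑((0 :: (List.range n).map Nat.succ).map (fun z => n + 1 - 1 - z)) := by
            rw [← List.range_succ_eq_map]
        _ = ↑(n :: (List.range n).map (fun z => n - 1 - z)) := by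
            rw [List.map_cons, List.map_map, hfn, show n + 1 - 1 - 0 = n by omega]
        _ = n ::ₘ ↑((List.range n).map (fun z => n - 1 - z)) := by rw [Multiset.cons_coe]
        _ = n ::ₘ ↑(List.range n) := by rw [rev_range_coe n]
        _ = ↑(List.range n) + {n} := by rw [← Multiset.singleton_add, add_comm]
        _ = ↑(List.range (n+1)) := by
            rw [List.range_succ, ← Multiset.coe_add, Multiset.coe_singleton]

/-! ### The zigzag paths -/

/-- `upL j k`: ascending same-parity-as-`j` values in `[j, j+k+2)`. -/
def upL (j k : ℕ) : List ℕ := run j 2 ((k+3)/2)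

/-- `dnL j k`: descending other-parity values in `(j, j+k+2)`. -/
def dnL (j k : ℕ) : List ℕ := (run (j+1) 2 ((k+2)/2)).reverse

/-- `F2 j k`: a hamiltonian path on `[0, j+k+2)` from `0` to `j+1`. -/
def F2 (j k : ℕ) : List ℕ := List.range j ++ upL j k ++ dnL j k

/-- `F1 j k`: a hamiltonian path on `[0, j+k+2)` from `k` to `j+k+1`. -/
def F1 (j k : ℕ) : List ℕ := ((F2 j k).map (fun z => j + k + 1 - z)).reverse

lemma F2_coe (j k : ℕ) : ((F2 j k : List ℕ) : Multiset ℕ) = (List.range (j+k+2) : List ℕ) := by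
  unfold F2 upL dnL
  rw [← Multiset.coe_add, ← Multiset.coe_add, Multiset.coe_reverse]
  have h1 : run j 2 ((k+3)/2) = (run 0 2 ((k+2+1)/2)).map (fun z => j + z) := by
    rw [run_shift]; norm_num
  have h2 : run (j+1) 2 ((k+2)/2) = (run 1 2 ((k+2)/2)).map (fun z => j + z) := by
    rw [run_shift]
  have hmain : ((run j 2 ((k+3)/2) : List ℕ) : Multiset ℕ) + (run (j+1) 2 ((k+2)/2) : List ℕ) =
      ((List.range (k+2)).map (fun z => j + z) : List ℕ) := by
    rw [h1, h2, ← Multiset.map_coe, ← Multiset.map_coe, ← Multiset.map_add, ← Multiset.map_coe]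
    rw [show (k+2+1)/2 = (k+2+1)/2 from rfl]
    have := interleave (k+2)
    rw [show (k+2+1)/2 = (k+3)/2 from rfl] at this
    rw [show ((k+3)/2) = ((k+2+1)/2) from rfl, this]
  rw [add_assoc, hmain, range_add_coe, show j + (k+2) = j + k + 2 by ring]

lemma range_eq_run (j : ℕ) : List.range j = run 0 1 j := by
  unfold run
  have h : (List.range j).map (fun i => 0 + 1 * i) = (List.range j).map id :=
    List.map_congr_left (fun i _ => by simp)
  rw [h, List.map_id]

lemma head?_append' {l₁ l₂ : List ℕ} {x : ℕ} (h : l₁.head? = some x) :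
    (l₁ ++ l₂).head? = some x := by
  cases l₁ with
  | nil => simp at h
  | cons a t => simpa using h

lemma getLast?_append' {l₁ l₂ : List ℕ} {x : ℕ} (h : l₂.getLast? = some x) :
    (l₁ ++ l₂).getLast? = some x := by
  have : l₂ ≠ [] := by rintro rfl; simp at h
  rw [List.getLast?_append_of_ne_nil _ this, h]

lemma upL_ne_nil (j k : ℕ) : upL j k ≠ [] := run_ne_nil _ _ _ (by omega)

lemma dnL_ne_nil (j k : ℕ) : dnL j k ≠ [] := by
  unfold dnL
  simp only [ne_eq, List.reverse_eq_nil_iff]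
  exact run_ne_nil _ _ _ (by omega)

lemma upL_head? (j k : ℕ) : (upL j k).head? = some j := run_head? _ _ _ (by omega)

lemma upL_getLast? (j k : ℕ) : (upL j k).getLast? = some (j + 2 * ((k+3)/2 - 1)) :=
  run_getLast? _ _ _ (by omega)

lemma dnL_head? (j k : ℕ) : (dnL j k).head? = some (j + 1 + 2 * ((k+2)/2 - 1)) := by
  unfold dnL
  rw [List.head?_reverse]
  exact run_getLast? _ _ _ (by omega)

lemma dnL_getLast? (j k : ℕ) : (dnL j k).getLast? = some (j+1) := by
  unfold dnL
  rw [List.getLast?_reverse]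
  exact run_head? _ _ _ (by omega)

lemma F2_head? (j k : ℕ) : (F2 j k).head? = some 0 := by
  unfold F2
  cases j with
  | zero => simpa using head?_append' (upL_head? 0 k)
  | succ m =>
      apply head?_append'
      apply head?_append'
      rw [List.range_succ_eq_map]
      rfl

lemma F2_getLast? (j k : ℕ) : (F2 j k).getLast? = some (j+1) :=
  getLast?_append' (dnL_getLast? j k)

lemma F2_pd (j k : ℕ) : pathDiffs (F2 j k) =
    Multiset.replicate (j+1) 1 + Multiset.replicate k 2 := by
  have hup : pathDiffs (upL j k) = Multiset.replicate ((k+3)/2 - 1) 2 := pd_run _ _ _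
  have hdn : pathDiffs (dnL j k) = Multiset.replicate ((k+2)/2 - 1) 2 := by
    rw [dnL, pd_reverse]; exact pd_run _ _ _
  have hud : pathDiffs (upL j k ++ dnL j k) =
      Multiset.replicate ((k+3)/2 - 1) 2 + {1} + Multiset.replicate ((k+2)/2 - 1) 2 := by
    rw [pd_append _ _ _ _ (upL_getLast? j k) (dnL_head? j k), hup, hdn,
      show dd (j + 2 * ((k+3)/2 - 1)) (j + 1 + 2 * ((k+2)/2 - 1)) = 1 by unfold dd; omega]
  have hcount : Multiset.replicate ((k+3)/2 - 1) 2 + Multiset.replicate ((k+2)/2 - 1) 2 =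
      Multiset.replicate k (2:ℕ) := by
    rw [← Multiset.replicate_add]; congr 1; omega
  cases j with
  | zero =>
      show pathDiffs (upL 0 k ++ dnL 0 k) = _
      rw [hud, ← hcount, Multiset.replicate_one]
      ac_rfl
  | succ m =>
      have hrg : pathDiffs (List.range (m+1)) = Multiset.replicate m 1 := by
        rw [range_eq_run, pd_run]; norm_num
      have hrgl : (List.range (m+1)).getLast? = some m := by
        rw [List.range_succ]
        exact getLast?_append' rfl
      have hhd : (upL (m+1) k ++ dnL (m+1) k).head? = some (m+1) :=
        head?_append' (upL_head? (m+1) k)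
      unfold F2
      rw [List.append_assoc, pd_append _ _ _ _ hrgl hhd, hud, hrg,
        show dd m (m+1) = 1 by unfold dd; omega]
      have hones : Multiset.replicate m (1:ℕ) + {1} + {1} = Multiset.replicate (m+1+1) 1 := by
        rw [← Multiset.replicate_one, ← Multiset.replicate_add, ← Multiset.replicate_add]
      rw [← hones, ← hcount]
      ac_rfl

lemma F2_mem_lt (j k : ℕ) {x : ℕ} (h : x ∈ F2 j k) : x < j + k + 2 := by
  have : x ∈ ((F2 j k : List ℕ) : Multiset ℕ) := by rwa [Multiset.mem_coe]
  rw [F2_coe, Multiset.mem_coe, List.mem_range] at this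
  exact this

lemma F1_coe (j k : ℕ) : ((F1 j k : List ℕ) : Multiset ℕ) = (List.range (j+k+2) : List ℕ) := by
  unfold F1
  rw [Multiset.coe_reverse, ← Multiset.map_coe, F2_coe, Multiset.map_coe]
  have h : (List.range (j+k+2)).map (fun z => j + k + 1 - z) =
      (List.range (j+k+2)).map (fun z => (j+k+2) - 1 - z) :=
    List.map_congr_left (fun x _ => by omega)
  rw [h, rev_range_coe]

lemma F1_mem_lt (j k : ℕ) {x : ℕ} (h : x ∈ F1 j k) : x < j + k + 2 := by
  have : x ∈ ((F1 j k : List ℕ) : Multiset ℕ) := by rwa [Multiset.mem_coe]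
  rw [F1_coe, Multiset.mem_coe, List.mem_range] at this
  exact this

lemma F1_pd (j k : ℕ) : pathDiffs (F1 j k) =
    Multiset.replicate (j+1) 1 + Multiset.replicate k 2 := by
  unfold F1
  rw [pd_reverse, pd_map _ _ ?hp, F2_pd]
  case hp =>
    intro x hx y hy
    have hx' := F2_mem_lt j k hx
    have hy' := F2_mem_lt j k hy
    unfold dd
    omega

lemma F1_head? (j k : ℕ) : (F1 j k).head? = some k := by
  unfold F1
  rw [List.head?_reverse, List.getLast?_map, F2_getLast?]
  simp only [Option.map_some]
  congr 1
  omega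

lemma F1_getLast? (j k : ℕ) : (F1 j k).getLast? = some (j+k+1) := by
  unfold F1
  rw [List.getLast?_reverse, List.head?_map, F2_head?]
  simp

/-! ### Snake construction -/

/-- Height of column `r`. -/
def hgt (q s r : ℕ) : ℕ := q + 1 + (if r < s then 1 else 0)

/-- Column list: the vertices of column `r`, bottom-to-top if `u`. -/
def colL (t q s r : ℕ) (u : Bool) : List ℕ :=
  if u then run r t (hgt q s r) else (run r t (hgt q s r)).reverse

/-- The snake path. -/
def snake (t q s : ℕ) : Bool → List ℕ → List ℕ
  | _, [] => []
  | u, r :: rest => colL t q s r u ++ snake t q s (!u) rest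

/-- Alternation condition: columns crossed at the top must have equal heights. -/
def Alt (s : ℕ) : Bool → List ℕ → Prop
  | _, [] => True
  | _, [_] => True
  | u, r :: r' :: rest => (u = true → (r < s ↔ r' < s)) ∧ Alt s (!u) (r' :: rest)

lemma hgt_pos (q s r : ℕ) : 1 ≤ hgt q s r := by unfold hgt; omega

lemma colL_ne_nil (t q s r : ℕ) (u : Bool) : colL t q s r u ≠ [] := by
  unfold colL
  cases u with
  | false =>
      simp only [Bool.false_eq_true, if_neg, ite_false, ne_eq, List.reverse_eq_nil_iff]
      exact run_ne_nil _ _ _ (hgt_pos q s r)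
  | true =>
      simp only [ite_true]
      exact run_ne_nil _ _ _ (hgt_pos q s r)

lemma colL_head? (t q s r : ℕ) (u : Bool) :
    (colL t q s r u).head? = some (if u then r else r + t * (hgt q s r - 1)) := by
  unfold colL
  cases u with
  | false =>
      simp only [Bool.false_eq_true, ite_false]
      rw [List.head?_reverse]
      exact run_getLast? _ _ _ (hgt_pos q s r)
  | true =>
      simp only [ite_true]
      exact run_head? _ _ _ (hgt_pos q s r)

lemma colL_getLast? (t q s r : ℕ) (u : Bool) :
    (colL t q s r u).getLast? = some (if u then r + t * (hgt q s r - 1) else r) := by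
  unfold colL
  cases u with
  | false =>
      simp only [Bool.false_eq_true, ite_false]
      rw [List.getLast?_reverse]
      exact run_head? _ _ _ (hgt_pos q s r)
  | true =>
      simp only [ite_true]
      exact run_getLast? _ _ _ (hgt_pos q s r)

lemma colL_pd (t q s r : ℕ) (u : Bool) :
    pathDiffs (colL t q s r u) = Multiset.replicate (hgt q s r - 1) t := by
  unfold colL
  cases u with
  | false =>
      simp only [Bool.false_eq_true, ite_false]
      rw [pd_reverse]
      exact pd_run _ _ _
  | true =>
      simp only [ite_true]
      exact pd_run _ _ _

lemma colL_coe (t q s r : ℕ) (u : Bool) :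
    ((colL t q s r u : List ℕ) : Multiset ℕ) = (run r t (hgt q s r) : List ℕ) := by
  unfold colL
  cases u with
  | false => simp [Multiset.coe_reverse]
  | true => simp

lemma snake_coe (t q s : ℕ) : ∀ (σ : List ℕ) (u : Bool),
    ((snake t q s u σ : List ℕ) : Multiset ℕ) =
      (σ.map (fun r => ((run r t (hgt q s r) : List ℕ) : Multiset ℕ))).sum
  | [], u => rfl
  | r :: rest, u => by
      show ((colL t q s r u ++ snake t q s (!u) rest : List ℕ) : Multiset ℕ) = _
      rw [← Multiset.coe_add, colL_coe, snake_coe t q s rest (!u), List.map_cons, List.sum_cons]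

lemma snake_head? (t q s r : ℕ) (rest : List ℕ) (u : Bool) :
    (snake t q s u (r :: rest)).head? = some (if u then r else r + t * (hgt q s r - 1)) := by
  show (colL t q s r u ++ snake t q s (!u) rest).head? = _
  exact head?_append' (colL_head? t q s r u)

lemma hgt_eq_of_iff {q s r r' : ℕ} (h : r < s ↔ r' < s) : hgt q s r = hgt q s r' := by
  unfold hgt
  by_cases hr : r < s
  · rw [if_pos hr, if_pos (h.mp hr)]
  · rw [if_neg hr, if_neg (fun h' => hr (h.mpr h'))]

lemma snake_pd (t q s : ℕ) : ∀ (σ : List ℕ) (u : Bool), Alt s u σ →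
    pathDiffs (snake t q s u σ) =
      Multiset.replicate ((σ.map (fun r => hgt q s r - 1)).sum) t + pathDiffs σ
  | [], u, _ => rfl
  | [r], u, _ => by
      show pathDiffs (colL t q s r u ++ []) = _
      rw [List.append_nil, colL_pd]
      simp [pd_single]
  | r :: r' :: rest, u, hA => by
      obtain ⟨h1, h2⟩ := hA
      have ih := snake_pd t q s (r' :: rest) (!u) h2
      show pathDiffs (colL t q s r u ++ snake t q s (!u) (r' :: rest)) = _
      have hlast := colL_getLast? t q s r u
      have hhead := snake_head? t q s r' rest (!u)
      rw [pd_append _ _ _ _ hlast hhead, ih, colL_pd]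
      have hdd : dd (if u then r + t * (hgt q s r - 1) else r)
          (if !u then r' else r' + t * (hgt q s r' - 1)) = dd r r' := by
        cases u with
        | true =>
            simp only [ite_true, Bool.not_true, Bool.false_eq_true, ite_false]
            rw [hgt_eq_of_iff (h1 rfl)]
            exact dd_add r r' _
        | false =>
            simp only [Bool.false_eq_true, ite_false, Bool.not_false, ite_true]
      rw [hdd]
      simp only [List.map_cons, List.sum_cons, Multiset.replicate_add, pd_cons_cons,
        ← Multiset.singleton_add]
      ac_rfl

lemma alt_of_all (s : ℕ) : ∀ (l : List ℕ) (u : Bool),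
    ((∀ x ∈ l, x < s) ∨ (∀ x ∈ l, s ≤ x)) → Alt s u l
  | [], u, _ => trivial
  | [x], u, _ => trivial
  | x :: x' :: l, u, h => by
      constructor
      · intro _
        rcases h with h | h
        · exact iff_of_true (h x (by simp)) (h x' (by simp))
        · exact iff_of_false (by have := h x (by simp); omega)
            (by have := h x' (by simp); omega)
      · apply alt_of_all s (x' :: l) (!u)
        rcases h with h | h
        · exact Or.inl (fun y hy => h y (List.mem_cons_of_mem _ hy))
        · exact Or.inr (fun y hy => h y (List.mem_cons_of_mem _ hy))

lemma alt_append (s : ℕ) : ∀ (xs ys : List ℕ),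
    (∀ x ∈ xs, x < s) → (∀ y ∈ ys, s ≤ y) →
    Alt s (decide (xs.length % 2 = 0)) (xs ++ ys)
  | [], ys, _, hy => by
      simpa using alt_of_all s ys true (Or.inr hy)
  | [x], ys, hx, hy => by
      cases ys with
      | nil => trivial
      | cons y ys =>
          refine ⟨fun h => by simp at h, ?_⟩
          simpa using alt_of_all s (y :: ys) true (Or.inr hy)
  | x :: x' :: xs, ys, hx, hy => by
      have ih := alt_append s (x' :: xs) ys
        (fun z hz => hx z (List.mem_cons_of_mem _ hz)) hy
      refine ⟨fun _ => iff_of_true (hx x (by simp)) (hx x' (by simp)), ?_⟩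
      have hb : (!decide ((x :: x' :: xs).length % 2 = 0)) =
          decide ((x' :: xs).length % 2 = 0) := by
        simp only [List.length_cons]
        rcases Nat.mod_two_eq_zero_or_one (xs.length) with h | h
        · simp only [show (xs.length + 1 + 1) % 2 = 0 by omega,
            show (xs.length + 1) % 2 = 1 by omega]
          simp
        · simp only [show (xs.length + 1 + 1) % 2 = 1 by omega,
            show (xs.length + 1) % 2 = 0 by omega]
          simp
      rw [hb]
      exact ih

/-! ### Summation lemmas over `range t` -/

lemma sum_map_add (f g : ℕ → Multiset ℕ) : ∀ (l : List ℕ),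
    (l.map (fun x => f x + g x)).sum = (l.map f).sum + (l.map g).sum
  | [] => by simp
  | x :: l => by
      simp only [List.map_cons, List.sum_cons, sum_map_add f g l]
      ac_rfl

lemma sum_map_singleton (f : ℕ → ℕ) : ∀ (l : List ℕ),
    (l.map (fun x => ({f x} : Multiset ℕ))).sum = ((l.map f : List ℕ) : Multiset ℕ)
  | [] => rfl
  | x :: l => by
      simp only [List.map_cons, List.sum_cons, sum_map_singleton f l]
      rw [← Multiset.cons_coe, ← Multiset.singleton_add]

/-- Sum of full columns of height m. -/
lemma sum_cols_full (t : ℕ) : ∀ m : ℕ,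
    ((List.range t).map (fun r => ((run r t m : List ℕ) : Multiset ℕ))).sum =
      ((List.range (m * t) : List ℕ) : Multiset ℕ)
  | 0 => by
      rw [show ((List.range t).map (fun r => ((run r t 0 : List ℕ) : Multiset ℕ))) =
        (List.range t).map (fun _ => (0 : Multiset ℕ)) from
          List.map_congr_left (fun r _ => rfl)]
      simp
  | (m+1) => by
      have step : ((List.range t).map (fun r => ((run r t (m+1) : List ℕ) : Multiset ℕ))) =
          (List.range t).map (fun r => ((run r t m : List ℕ) : Multiset ℕ) + {r + t * m}) :=
        List.map_congr_left (fun r _ => by rw [run_succ, ← Multiset.coe_add]; rfl)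
      rw [step, sum_map_add, sum_cols_full t m, sum_map_singleton]
      have : ((List.range t).map (fun r => r + t * m)) =
          ((List.range t).map (fun r => m * t + r)) :=
        List.map_congr_left (fun r _ => by ring)
      rw [this]
      have hsh : (((List.range t).map (fun z => m * t + z) : List ℕ) : Multiset ℕ) =
          ((List.range t).map (fun z => m * t + z) : List ℕ) := rfl
      rw [range_add_coe (m*t) t, show m * t + t = (m+1) * t by ring]

/-- Sum of the if-part singletons. -/
lemma sum_cols_extra (x s : ℕ) : ∀ t : ℕ,
    ((List.range t).map (fun r => if r < s then ({r + x} : Multiset ℕ) else 0)).sum =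
      (((List.range (min s t)).map (fun r => r + x) : List ℕ) : Multiset ℕ)
  | 0 => by simp
  | (n+1) => by
      rw [List.range_succ, List.map_append, List.sum_append, sum_cols_extra x s n]
      by_cases h : n < s
      · rw [show min s (n+1) = min s n + 1 by omega, List.range_succ, List.map_append]
        push_cast
        simp only [List.map_cons, List.map_nil, List.sum_cons, List.sum_nil, if_pos h]
        rw [show min s n = n by omega]
        rw [← Multiset.coe_add]
        rfl
      · rw [show min s (n+1) = min s n by omega]
        simp only [List.map_cons, List.map_nil, List.sum_cons, List.sum_nil, if_neg h]
        simp

/-- Sum of the heights minus one. -/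
lemma sum_hgt (q s : ℕ) : ∀ t : ℕ,
    ((List.range t).map (fun r => hgt q s r - 1)).sum = q * t + min s t
  | 0 => by simp
  | (n+1) => by
      rw [List.range_succ, List.map_append, List.sum_append, sum_hgt q s n]
      unfold hgt
      simp only [List.map_cons, List.map_nil, List.sum_cons, List.sum_nil]
      have hq : q * (n+1) = q * n + q := by ring
      by_cases h : n < s
      · rw [if_pos h, hq]
        omega
      · rw [if_neg h, hq]
        omega

/-! ### Assembling the column order σ -/

lemma assemble (t s a b p1 k1 p2 q2 h0 : ℕ) (seg1 R : List ℕ)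
    (hs : 1 ≤ s) (hst : s < t)
    (h1coe : ((seg1 : List ℕ) : Multiset ℕ) = (List.range s : List ℕ))
    (h1pd : pathDiffs seg1 = Multiset.replicate p1 1 + Multiset.replicate k1 2)
    (h1last : seg1.getLast? = some (s-1))
    (hRcoe : ((R : List ℕ) : Multiset ℕ) = (List.range (t-s) : List ℕ))
    (hRpd : pathDiffs R = Multiset.replicate p2 1 + Multiset.replicate q2 2)
    (hRhead : R.head? = some h0)
    (hcnt : Multiset.replicate a (1:ℕ) + Multiset.replicate b 2 =
      Multiset.replicate p1 1 + Multiset.replicate k1 2 + {dd (s-1) (h0+s)} +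
      (Multiset.replicate p2 1 + Multiset.replicate q2 2)) :
    ∃ σ : List ℕ, ((σ : List ℕ) : Multiset ℕ) = (List.range t : List ℕ) ∧
      pathDiffs σ = Multiset.replicate a 1 + Multiset.replicate b 2 ∧
      Alt s (decide (s % 2 = 0)) σ := by
  set seg2 : List ℕ := R.map (fun z => z + s) with hseg2
  have hs2head : seg2.head? = some (h0 + s) := by
    rw [hseg2, List.head?_map, hRhead, Option.map_some]
  have hs2pd : pathDiffs seg2 = Multiset.replicate p2 1 + Multiset.replicate q2 2 := by
    rw [hseg2, pd_map _ _ (fun x _ y _ => dd_add x y s), hRpd]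
  have hs2coe : ((seg2 : List ℕ) : Multiset ℕ) =
      (((List.range (t-s)).map (fun z => z + s) : List ℕ) : Multiset ℕ) := by
    rw [hseg2, ← Multiset.map_coe, hRcoe, Multiset.map_coe]
  refine ⟨seg1 ++ seg2, ?_, ?_, ?_⟩
  · rw [← Multiset.coe_add, h1coe, hs2coe]
    have hbr : (List.range (t-s)).map (fun z => z + s) =
        (List.range (t-s)).map (fun z => s + z) :=
      List.map_congr_left (fun z _ => by ring)
    rw [hbr, range_add_coe, show s + (t-s) = t by omega]
  · rw [pd_append _ _ _ _ h1last hs2head, h1pd, hs2pd, ← hcnt]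
  · have hlen : seg1.length = s := by
      have := congrArg Multiset.card h1coe
      simpa [Multiset.coe_card] using this
    have hmem1 : ∀ x ∈ seg1, x < s := by
      intro x hx
      have : x ∈ ((seg1 : List ℕ) : Multiset ℕ) := by rwa [Multiset.mem_coe]
      rw [h1coe, Multiset.mem_coe, List.mem_range] at this
      exact this
    have hmem2 : ∀ y ∈ seg2, s ≤ y := by
      intro y hy
      rw [hseg2, List.mem_map] at hy
      obtain ⟨z, _, rfl⟩ := hy
      omega
    have := alt_append s seg1 seg2 hmem1 hmem2
    rwa [hlen] at this

/-- Existence of the column order. -/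
lemma sigma_exists (t s a b : ℕ) (h4 : 4 ≤ t) (ha : 2 ≤ a) (hb : 1 ≤ b)
    (hab : a + b = t - 1) (hst : s < t) :
    ∃ σ : List ℕ, ((σ : List ℕ) : Multiset ℕ) = (List.range t : List ℕ) ∧
      pathDiffs σ = Multiset.replicate a 1 + Multiset.replicate b 2 ∧
      Alt s (decide (s % 2 = 0)) σ := by
  have hb3 : b + 3 ≤ t := by omega
  by_cases hs0 : s = 0
  · subst hs0
    refine ⟨F1 (t-2-b) b, ?_, ?_, ?_⟩
    · rw [F1_coe, show t-2-b + b + 2 = t by omega]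
    · rw [F1_pd, show t-2-b+1 = a by omega]
    · exact alt_of_all 0 _ _ (Or.inr (fun x _ => Nat.zero_le x))
  · have hs1 : 1 ≤ s := by omega
    set k1 := min b (s - 2) with hk1
    set k2 := b - k1 with hk2
    -- seg1
    obtain ⟨seg1, h1coe, h1pd, h1last⟩ : ∃ L : List ℕ,
        ((L : List ℕ) : Multiset ℕ) = (List.range s : List ℕ) ∧
        pathDiffs L = Multiset.replicate (s-1-k1) 1 + Multiset.replicate k1 2 ∧
        L.getLast? = some (s-1) := by
      by_cases hseq : s = 1
      · refine ⟨[0], ?_, ?_, ?_⟩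
        · rw [hseq]; rfl
        · rw [pd_single, show s-1-k1 = 0 by omega, show k1 = 0 by omega]
          rfl
        · rw [hseq]
          rfl
      · have hs2 : 2 ≤ s := by omega
        have hk1s : k1 + 2 ≤ s := by omega
        refine ⟨F1 (s-2-k1) k1, ?_, ?_, ?_⟩
        · rw [F1_coe, show s-2-k1 + k1 + 2 = s by omega]
        · rw [F1_pd, show s-2-k1+1 = s-1-k1 by omega]
        · rw [F1_getLast?, show s-2-k1 + k1 + 1 = s-1 by omega]
    by_cases hv : b + 3 = t ∧ 2 ≤ s ∧ s + 2 ≤ t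
    · -- variant: junction of length 2
      obtain ⟨hvb, hvs, hvu⟩ := hv
      have hk1v : k1 = s - 2 := by omega
      refine assemble t s a b (s-1-k1) k1 1 (t-s-2) 1 seg1 ((F2 0 (t-s-2)).reverse)
        hs1 hst h1coe h1pd h1last ?_ ?_ ?_ ?_
      · rw [Multiset.coe_reverse, F2_coe, show 0 + (t-s-2) + 2 = t-s by omega]
      · rw [pd_reverse, F2_pd]
      · rw [List.head?_reverse, F2_getLast?]
      · rw [show dd (s-1) (1+s) = 2 by unfold dd; omega]
        rw [show a = (s-1-k1) + 1 by omega, show b = k1 + (1 + (t-s-2)) by omega,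
          Multiset.replicate_add, Multiset.replicate_add, Multiset.replicate_add,
          Multiset.replicate_one, Multiset.replicate_one]
        ac_rfl
    · -- normal: junction of length 1
      have hcase : k2 + 2 ≤ t - s ∨ (t - s = 1 ∧ k2 = 0) := by omega
      obtain ⟨R, hRcoe, hRpd, hRhead⟩ : ∃ R : List ℕ,
          ((R : List ℕ) : Multiset ℕ) = (List.range (t-s) : List ℕ) ∧
          pathDiffs R = Multiset.replicate (t-s-1-k2) 1 + Multiset.replicate k2 2 ∧
          R.head? = some 0 := by
        rcases hcase with hcase | ⟨hu1, hk20⟩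
        · refine ⟨F2 (t-s-2-k2) k2, ?_, ?_, ?_⟩
          · rw [F2_coe, show t-s-2-k2 + k2 + 2 = t-s by omega]
          · rw [F2_pd, show t-s-2-k2+1 = t-s-1-k2 by omega]
          · exact F2_head? _ _
        · refine ⟨[0], ?_, ?_, rfl⟩
          · rw [hu1]; rfl
          · rw [pd_single, show t-s-1-k2 = 0 by omega, hk20]
            rfl
      refine assemble t s a b (s-1-k1) k1 (t-s-1-k2) k2 0 seg1 R
        hs1 hst h1coe h1pd h1last hRcoe hRpd hRhead ?_
      rw [show dd (s-1) (0+s) = 1 by unfold dd; omega]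
      rw [show a = (s-1-k1) + (1 + (t-s-1-k2)) by omega, show b = k1 + k2 by omega,
        Multiset.replicate_add, Multiset.replicate_add, Multiset.replicate_add,
        Multiset.replicate_one]
      ac_rfl

end S9

theorem stmt9 (t a b c : ℕ) (ht : Even t) (h4 : 4 ≤ t)
    (ha : 2 ≤ a) (hb : 1 ≤ b) (hc : 1 ≤ c) (hab : a + b = t - 1) :
    ∃ l : List ℕ,
      IsLinReal (Multiset.replicate a 1 + Multiset.replicate b 2 +
        Multiset.replicate c t) l := by
  set q := c / t with hqdef
  set s := c % t with hsdef
  have ht0 : 0 < t := by omega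
  have hst : s < t := Nat.mod_lt _ ht0
  have hqs : t * q + s = c := Nat.div_add_mod c t
  obtain ⟨σ, hcoe, hpd, halt⟩ := S9.sigma_exists t s a b h4 ha hb hab hst
  have hperm : σ.Perm (List.range t) := Multiset.coe_eq_coe.mp hcoe
  refine ⟨S9.snake t q s (decide (s % 2 = 0)) σ, ?_, ?_⟩
  · have hcard : Multiset.card (Multiset.replicate a 1 + Multiset.replicate b 2 +
        Multiset.replicate c t) = a + b + c := by simp
    rw [hcard]
    apply Multiset.coe_eq_coe.mp
    rw [S9.snake_coe]
    rw [(hperm.map (fun r => ((S9.run r t (S9.hgt q s r) : List ℕ) : Multiset ℕ))).sum_eq]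
    have hsplit : (List.range t).map (fun r => ((S9.run r t (S9.hgt q s r) : List ℕ) : Multiset ℕ)) =
        (List.range t).map (fun r => ((S9.run r t (q+1) : List ℕ) : Multiset ℕ) +
          (if r < s then ({r + t*(q+1)} : Multiset ℕ) else 0)) := by
      refine List.map_congr_left (fun r _ => ?_)
      unfold S9.hgt
      by_cases h : r < s
      · simp only [if_pos h]
        rw [S9.run_succ, ← Multiset.coe_add, Multiset.coe_singleton]
      · simp only [if_neg h, add_zero]
    rw [hsplit, S9.sum_map_add, S9.sum_cols_full t (q+1), S9.sum_cols_extra (t*(q+1)) s t,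
      show min s t = s by omega]
    have hbr : (List.range s).map (fun r => r + t*(q+1)) =
        (List.range s).map (fun z => (q+1)*t + z) :=
      List.map_congr_left (fun z _ => by ring)
    rw [hbr, S9.range_add_coe]
    have h1 : (q+1)*t + s = t + (t*q + s) := by ring
    rw [h1, hqs]
    congr 2
    omega
  · rw [S9.snake_pd t q s σ _ halt, hpd]
    have hsum : (σ.map (fun r => S9.hgt q s r - 1)).sum = q * t + min s t := by
      rw [(hperm.map _).sum_eq, S9.sum_hgt]
    have hqt : q * t + s = c := by rw [mul_comm]; exact hqs
    rw [hsum, show min s t = s by omega, hqt]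
    ac_rfl
end

section
/- For every integer k ≥ 0, the sequence [0, 4, 8, …, 4k+8, then 3, 7, …, 4k+7, then 4k+5, 4k+1, …, 1, then 2, 6, …, 4k+6] is a Hamiltonian path of the complete graph on {0,…,4k+8} whose multiset of cyclic edge-lengths min(|x−y|, (4k+9)−|x−y|) equals {1, 2, 4^{4k+6}}, i.e., a cyclic realization of {1, 2, 4^{4k+6}}. -/
lemma zw_append' (f : ℕ → ℕ → ℕ) :
    ∀ (l₁ : List ℕ) (a : ℕ) (l₂ : List ℕ),
      List.zipWith f (l₁ ++ a :: l₂) (l₁ ++ a :: l₂).tail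
        = List.zipWith f (l₁ ++ [a]) (l₁ ++ [a]).tail
            ++ List.zipWith f (a :: l₂) (a :: l₂).tail
  | [], a, l₂ => by simp
  | [x], a, l₂ => by simp
  | x :: y :: t, a, l₂ => by
    have ih := zw_append' f (y :: t) a l₂
    simp only [List.cons_append, List.tail_cons, List.zipWith_cons_cons] at *
    rw [ih]

lemma zw_map_snoc (f : ℕ → ℕ → ℕ) (c : ℕ) :
    ∀ (n : ℕ) (g : ℕ → ℕ) (b : ℕ), (∀ i, i + 1 ≤ n → f (g i) (g (i+1)) = c) →
      List.zipWith f ((List.range (n+1)).map g ++ [b]) (((List.range (n+1)).map g ++ [b]).tail)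
        = List.replicate n c ++ [f (g n) b]
  | 0, g, b, _ => by simp [List.range_succ]
  | n+1, g, b, h => by
    have ih := zw_map_snoc f c n (fun i => g (i+1)) b (fun i hi => h (i+1) (by omega))
    rw [List.range_succ_eq_map, List.range_succ_eq_map]
    simp only [List.map_cons, List.map_map, Function.comp_def, List.cons_append,
      List.tail_cons, List.zipWith_cons_cons]
    rw [List.range_succ_eq_map] at ih
    simp only [List.map_cons, List.map_map, Function.comp_def, List.cons_append,
      List.tail_cons] at ih
    rw [ih, h 0 (by omega)]
    simp [List.replicate_succ]

lemma zw_map_range (f : ℕ → ℕ → ℕ) (c : ℕ) :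
    ∀ (n : ℕ) (g : ℕ → ℕ), (∀ i, i + 1 ≤ n → f (g i) (g (i+1)) = c) →
      List.zipWith f ((List.range (n+1)).map g) (((List.range (n+1)).map g).tail)
        = List.replicate n c
  | 0, g, _ => by simp [List.range_succ]
  | n+1, g, h => by
    have ih := zw_map_range f c n (fun i => g (i+1)) (fun i hi => h (i+1) (by omega))
    rw [List.range_succ_eq_map, List.range_succ_eq_map]
    simp only [List.map_cons, List.map_map, Function.comp_def, List.tail_cons,
      List.zipWith_cons_cons]
    rw [List.range_succ_eq_map] at ih
    simp only [List.map_cons, List.map_map, Function.comp_def, List.tail_cons] at ih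
    rw [ih, h 0 (by omega)]
    simp [List.replicate_succ]

lemma diffs_aux (k : ℕ) :
    cycDiffs (4*k+9)
      ((List.range (k+3)).map (fun i => 4*i) ++
       (List.range (k+2)).map (fun i => 3 + 4*i) ++
       (List.range (k+2)).map (fun i => 4*k+5 - 4*i) ++
       (List.range (k+2)).map (fun i => 2 + 4*i))
      = 1 ::ₘ 2 ::ₘ Multiset.replicate (4*k+6) 4 := by
  set f := cycLen (4*k+9) with hf
  have hB : (List.range (k+2)).map (fun i => 3 + 4*i)
      = 3 :: (List.range (k+1)).map (fun i => 7 + 4*i) := by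
    rw [List.range_succ_eq_map]
    simp only [List.map_cons, List.map_map, Function.comp_def, List.cons.injEq]
    refine ⟨by simp, List.map_congr_left fun a _ => by omega⟩
  have hC : (List.range (k+2)).map (fun i => 4*k+5 - 4*i)
      = (4*k+5) :: (List.range (k+1)).map (fun i => 4*k+1 - 4*i) := by
    rw [List.range_succ_eq_map]
    simp only [List.map_cons, List.map_map, Function.comp_def, List.cons.injEq]
    refine ⟨by simp, List.map_congr_left fun a _ => by omega⟩
  have hD : (List.range (k+2)).map (fun i => 2 + 4*i)
      = 2 :: (List.range (k+1)).map (fun i => 6 + 4*i) := by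
    rw [List.range_succ_eq_map]
    simp only [List.map_cons, List.map_map, Function.comp_def, List.cons.injEq]
    refine ⟨by simp, List.map_congr_left fun a _ => by omega⟩
  set B1 := (List.range (k+1)).map (fun i => 7 + 4*i) with hB1
  set C1 := (List.range (k+1)).map (fun i => 4*k+1 - 4*i) with hC1
  set D1 := (List.range (k+1)).map (fun i => 6 + 4*i) with hD1
  unfold cycDiffs
  rw [hB, hC, hD, List.append_assoc, List.append_assoc]
  simp only [List.cons_append]
  rw [← hf,
    zw_append' f ((List.range (k+3)).map (fun i => 4*i)) 3 (B1 ++ ((4*k+5) :: (C1 ++ 2 :: D1)))]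
  rw [show (3 : ℕ) :: (B1 ++ ((4*k+5) :: (C1 ++ 2 :: D1)))
        = (3 :: B1) ++ ((4*k+5) :: (C1 ++ 2 :: D1)) from rfl]
  rw [zw_append' f (3 :: B1) (4*k+5) (C1 ++ 2 :: D1)]
  rw [show (4*k+5) :: (C1 ++ 2 :: D1) = ((4*k+5) :: C1) ++ 2 :: D1 from rfl]
  rw [zw_append' f ((4*k+5) :: C1) 2 D1]
  have h1 : ∀ i, i + 1 ≤ k+2 → f (4*i) (4*(i+1)) = 4 := by
    intro i hi; simp only [hf, cycLen]; omega
  have h2 : ∀ i, i + 1 ≤ k+1 → f (3 + 4*i) (3 + 4*(i+1)) = 4 := by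
    intro i hi; simp only [hf, cycLen]; omega
  have h3 : ∀ i, i + 1 ≤ k+1 → f (4*k+5 - 4*i) (4*k+5 - 4*(i+1)) = 4 := by
    intro i hi; simp only [hf, cycLen]; omega
  have h4 : ∀ i, i + 1 ≤ k+1 → f (2 + 4*i) (2 + 4*(i+1)) = 4 := by
    intro i hi; simp only [hf, cycLen]; omega
  rw [zw_map_snoc f 4 (k+2) (fun i => 4*i) 3 h1]
  rw [← hB, zw_map_snoc f 4 (k+1) (fun i => 3 + 4*i) (4*k+5) h2]
  rw [show ((4*k+5) :: C1) ++ [2] = (List.range (k+2)).map (fun i => 4*k+5 - 4*i) ++ [2] by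
    rw [hC]]
  rw [zw_map_snoc f 4 (k+1) (fun i => 4*k+5 - 4*i) 2 h3]
  rw [show (2 :: D1) = (List.range (k+2)).map (fun i => 2 + 4*i) by rw [hD]]
  rw [zw_map_range f 4 (k+1) (fun i => 2 + 4*i) h4]
  have v1 : f (4*(k+2)) 3 = 4 := by simp only [hf, cycLen]; omega
  have v2 : f (3 + 4*(k+1)) (4*k+5) = 2 := by simp only [hf, cycLen]; omega
  have v3 : f (4*k+5 - 4*(k+1)) 2 = 1 := by simp only [hf, cycLen]; omega
  rw [v1, v2, v3]
  simp only [← Multiset.coe_add, Multiset.coe_replicate, Multiset.coe_singleton]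
  refine Multiset.ext.mpr fun a => ?_
  by_cases e1 : a = 1 <;> by_cases e2 : a = 2 <;> by_cases e4 : a = 4 <;>
    simp [e1, e2, e4, eq_comm, Multiset.count_replicate, Multiset.count_cons,
      Multiset.count_singleton] <;> omega

lemma perm_aux (k : ℕ) :
    ((List.range (k+3)).map (fun i => 4*i) ++
       (List.range (k+2)).map (fun i => 3 + 4*i) ++
       (List.range (k+2)).map (fun i => 4*k+5 - 4*i) ++
       (List.range (k+2)).map (fun i => 2 + 4*i)).Perm (List.range (4*k+9)) := by
  induction k with
  | zero => decide
  | succ k ih =>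
    rw [← Multiset.coe_eq_coe] at ih ⊢
    have hA : (List.range (k+1+3)).map (fun i => 4*i)
        = (List.range (k+3)).map (fun i => 4*i) ++ [4*k+12] := by
      have : k+1+3 = (k+3)+1 := by ring
      rw [this, List.range_succ]
      simp; omega
    have hB : (List.range (k+1+2)).map (fun i => 3 + 4*i)
        = (List.range (k+2)).map (fun i => 3 + 4*i) ++ [4*k+11] := by
      have : k+1+2 = (k+2)+1 := by ring
      rw [this, List.range_succ]
      simp; omega
    have hD : (List.range (k+1+2)).map (fun i => 2 + 4*i)
        = (List.range (k+2)).map (fun i => 2 + 4*i) ++ [4*k+10] := by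
      have : k+1+2 = (k+2)+1 := by ring
      rw [this, List.range_succ]
      simp; omega
    have hC : (List.range (k+1+2)).map (fun i => 4*(k+1)+5 - 4*i)
        = (4*k+9) :: (List.range (k+2)).map (fun i => 4*k+5 - 4*i) := by
      have : k+1+2 = (k+2)+1 := by ring
      rw [this, List.range_succ_eq_map]
      simp only [List.map_cons, List.map_map, Function.comp_def]
      have h1 : 4*(k+1)+5 - 4*0 = 4*k+9 := by omega
      rw [h1]
      congr 1
      exact List.map_congr_left fun a _ => by omega
    have hR : ((List.range (4*(k+1)+9) : List ℕ) : Multiset ℕ)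
        = ↑(List.range (4*k+9)) + ({4*k+9} + ({4*k+10} + ({4*k+11} + {4*k+12}))) := by
      have h2 : 4*(k+1)+9 = (4*k+9)+4 := by ring
      rw [h2, List.range_add]
      simp only [← Multiset.coe_add]
      congr 1
    rw [hA, hB, hC, hD, hR, ← ih]
    simp only [← Multiset.cons_coe, ← Multiset.coe_add, List.append_assoc,
      ← Multiset.singleton_add]
    abel

theorem stmt13 (k : ℕ) :
    ∃ l : List ℕ,
      l = (List.range (k+3)).map (fun i => 4*i) ++
          (List.range (k+2)).map (fun i => 3 + 4*i) ++
          (List.range (k+2)).map (fun i => 4*k+5 - 4*i) ++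
          (List.range (k+2)).map (fun i => 2 + 4*i) ∧
      IsCycReal (1 ::ₘ 2 ::ₘ Multiset.replicate (4*k+6) 4) l := by
  refine ⟨_, rfl, ?_, ?_⟩
  · have hcard : Multiset.card (1 ::ₘ 2 ::ₘ Multiset.replicate (4*k+6) 4) + 1 = 4*k+9 := by
      simp
    rw [hcard]
    exact perm_aux k
  · have hcard : Multiset.card (1 ::ₘ 2 ::ₘ Multiset.replicate (4*k+6) 4) + 1 = 4*k+9 := by
      simp
    rw [hcard]
    exact diffs_aux k
end

section
/- For every even integer t ≥ 6 with t ≡ 2 (mod 4) and every integer k ≥ 0, the multiset {1, 2^{t−2}, t^{tk+1}} admits a linear realization on {0, 1, …, tk + 2t − 2}, given explicitly by: start at 0 and go up by steps of t to tk+t, step down by 2 to tk+t−2 and go down by t to t−2, continue alternating until reaching the class of 2, go from 2 up to tk+2, step down by 1 to tk+1, go down to 1, step up by 2 to 3, go up to tk+3, and so on, ending at tk+t−1; i.e., the path [0→tk+t, tk+t−2→t−2, …, tk+4→4, 2→tk+2, tk+1→1, 3→tk+3, …, tk+t−1→t−1] where x→y denotes an arithmetic progression with common difference ±t. -/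
/-- The run through the even congruence class visited at step `j`:
class `0` ascending for `j = 0`, then classes `t−2, t−4, …, 2`,
alternately descending and ascending. -/
def evenRun (t k j : ℕ) : List ℕ :=
  if j = 0 then (List.range (k+2)).map (fun i => t*i)
  else if j % 2 = 1 then (List.range (k+1)).map (fun i => (t - 2*j) + t*(k - i))
  else (List.range (k+1)).map (fun i => (t - 2*j) + t*i)

/-- The run through the odd congruence class `2j+1`,
alternately descending and ascending, starting with class `1` descending. -/
def oddRun (t k j : ℕ) : List ℕ :=
  if j % 2 = 0 then (List.range (k+1)).map (fun i => (2*j+1) + t*(k - i))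
  else (List.range (k+1)).map (fun i => (2*j+1) + t*i)

/-- The path `[0→tk+t, tk+t−2→t−2, …, 2→tk+2, tk+1→1, 3→tk+3, …, tk+t−1→t−1]`,
where `x→y` denotes an arithmetic progression with common difference `±t`. -/
def zigzagPath (t k : ℕ) : List ℕ :=
  ((List.range (t/2)).map (evenRun t k)).flatten ++
  ((List.range (t/2)).map (oddRun t k)).flatten


section Helpers

lemma pd_single (a : ℕ) : pathDiffs [a] = 0 := rfl

lemma pd_cons (a b : ℕ) (l : List ℕ) (h : l.head? = some b) :
    pathDiffs (a :: l) = (max a b - min a b) ::ₘ pathDiffs l := by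
  cases l with
  | nil => cases h
  | cons c l' =>
    obtain rfl : c = b := by simpa using h
    rfl

lemma pd_append2 (a b : List ℕ) (x y : ℕ) (hx : a.getLast? = some x) (hy : b.head? = some y) :
    pathDiffs (a ++ b) = pathDiffs a + ((max x y - min x y) ::ₘ pathDiffs b) := by
  induction a with
  | nil => cases hx
  | cons z a ih =>
    cases a with
    | nil =>
      obtain rfl : z = x := by simpa using hx
      simp only [List.singleton_append, pd_single, zero_add]
      exact pd_cons z y b hy
    | cons w a' =>
      have hx' : (w :: a').getLast? = some x := by
        rw [← hx]; simp [List.getLast?_cons_cons]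
      have hh : ((w :: a') ++ b).head? = some w := rfl
      rw [List.cons_append, pd_cons z w ((w :: a') ++ b) (by simpa using hh),
          pd_cons z w (w :: a') rfl, ih hx', Multiset.cons_add]

lemma fdiff_right (a t : ℕ) : max a (a + t) - min a (a + t) = t := by
  rw [max_eq_right (Nat.le_add_right a t), min_eq_left (Nat.le_add_right a t),
    Nat.add_sub_cancel_left]

lemma fdiff_left (a t : ℕ) : max (a + t) a - min (a + t) a = t := by
  rw [max_eq_left (Nat.le_add_right a t), min_eq_right (Nat.le_add_right a t),
    Nat.add_sub_cancel_left]

lemma pd_run (t : ℕ) : ∀ (n : ℕ) (g : ℕ → ℕ),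
    (∀ i, i + 1 < n → max (g i) (g (i+1)) - min (g i) (g (i+1)) = t) →
    pathDiffs ((List.range n).map g) = Multiset.replicate (n-1) t := by
  intro n
  induction n with
  | zero => intro g h; rfl
  | succ n ih =>
    intro g h
    cases n with
    | zero => rfl
    | succ n' =>
      rw [List.range_succ_eq_map, List.map_cons, List.map_map]
      have hhead : ((List.range (n'+1)).map (g ∘ Nat.succ)).head? = some (g 1) := by
        rw [List.range_succ_eq_map]; simp
      rw [pd_cons _ _ _ hhead, ih (g ∘ Nat.succ) (fun i hi => h (i+1) (by omega)),
        h 0 (by omega)]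
      simp [Multiset.replicate_succ]

lemma mapRange_head (g : ℕ → ℕ) (n : ℕ) :
    ((List.range (n+1)).map g).head? = some (g 0) := by
  rw [List.range_succ_eq_map]; simp

lemma mapRange_last (g : ℕ → ℕ) (n : ℕ) :
    ((List.range (n+1)).map g).getLast? = some (g n) := by
  rw [List.range_succ, List.map_append]
  simp

lemma ascSpec (t c k : ℕ) (ht : 0 < t) :
    pathDiffs ((List.range (k+1)).map (fun i => c + t*i)) = Multiset.replicate k t ∧
    ((List.range (k+1)).map (fun i => c + t*i)).head? = some c ∧
    ((List.range (k+1)).map (fun i => c + t*i)).getLast? = some (c + t*k) ∧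
    ((List.range (k+1)).map (fun i => c + t*i)).length = k+1 ∧
    ((List.range (k+1)).map (fun i => c + t*i)).Nodup ∧
    ∀ x ∈ (List.range (k+1)).map (fun i => c + t*i), ∃ i ≤ k, x = c + t*i := by
  refine ⟨?_, ?_, ?_, ?_, ?_, ?_⟩
  · apply pd_run
    intro i _
    have : c + t*(i+1) = (c + t*i) + t := by ring
    rw [this, fdiff_right]
  · simpa using mapRange_head (fun i => c + t*i) k
  · simpa using mapRange_last (fun i => c + t*i) k
  · simp
  · refine (List.nodup_range (n := k+1)).map_on ?_
    intro i _ j _ h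
    have : t * i = t * j := by omega
    exact Nat.eq_of_mul_eq_mul_left ht this
  · intro x hx
    simp only [List.mem_map, List.mem_range] at hx
    obtain ⟨i, hi, rfl⟩ := hx
    exact ⟨i, by omega, rfl⟩

lemma descSpec (t c k : ℕ) (ht : 0 < t) :
    pathDiffs ((List.range (k+1)).map (fun i => c + t*(k-i))) = Multiset.replicate k t ∧
    ((List.range (k+1)).map (fun i => c + t*(k-i))).head? = some (c + t*k) ∧
    ((List.range (k+1)).map (fun i => c + t*(k-i))).getLast? = some c ∧
    ((List.range (k+1)).map (fun i => c + t*(k-i))).length = k+1 ∧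
    ((List.range (k+1)).map (fun i => c + t*(k-i))).Nodup ∧
    ∀ x ∈ (List.range (k+1)).map (fun i => c + t*(k-i)), ∃ i ≤ k, x = c + t*i := by
  refine ⟨?_, ?_, ?_, ?_, ?_, ?_⟩
  · apply pd_run
    intro i hi
    have h1 : k - i = (k - (i+1)) + 1 := by omega
    have : c + t*(k-i) = (c + t*(k-(i+1))) + t := by rw [h1]; ring
    rw [this, fdiff_left]
  · simpa using mapRange_head (fun i => c + t*(k-i)) k
  · have := mapRange_last (fun i => c + t*(k-i)) k
    simpa using this
  · simp
  · refine (List.nodup_range (n := k+1)).map_on ?_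
    intro i hi j hj h
    simp only [List.mem_range] at hi hj
    have : t * (k-i) = t * (k-j) := by omega
    have := Nat.eq_of_mul_eq_mul_left ht this
    omega
  · intro x hx
    simp only [List.mem_map, List.mem_range] at hx
    obtain ⟨i, hi, rfl⟩ := hx
    exact ⟨k - i, by omega, rfl⟩

lemma flatten_step (f : ℕ → List ℕ) (j : ℕ) :
    ((List.range (j+1)).map f).flatten = ((List.range j).map f).flatten ++ f j := by
  rw [List.range_succ]; simp

lemma getLast?_append_of (l l' : List ℕ) (v : ℕ) (h : l'.getLast? = some v) :
    (l ++ l').getLast? = some v := by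
  rw [List.getLast?_append, h]; rfl

lemma head?_append_of (l l' : List ℕ) (v : ℕ) (h : l.head? = some v) :
    (l ++ l').head? = some v := by
  rw [List.head?_append, h]; rfl

lemma rep_merge (u v : ℕ) (huv : u ≠ v) (p q r : ℕ) :
    Multiset.replicate p u + Multiset.replicate q v + (v ::ₘ Multiset.replicate r u)
      = Multiset.replicate (p+r) u + Multiset.replicate (q+1) v := by
  refine Multiset.ext.mpr fun x => ?_
  simp only [Multiset.count_add, Multiset.count_replicate, Multiset.count_cons]
  split_ifs <;> omega

lemma rep_final (u v w p q r : ℕ) (huv : u ≠ v) (huw : u ≠ w) (hvw : v ≠ w) :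
    Multiset.replicate p u + Multiset.replicate q v
      + (w ::ₘ (Multiset.replicate r u + Multiset.replicate q v))
      = {w} + Multiset.replicate (q+q) v + Multiset.replicate (p+r) u := by
  refine Multiset.ext.mpr fun x => ?_
  simp only [Multiset.count_add, Multiset.count_replicate, Multiset.count_cons,
    Multiset.count_singleton]
  split_ifs <;> omega

def LastE (t k j : ℕ) : ℕ :=
  if j = 1 then t*(k+1) else if j % 2 = 0 then t - 2*(j-1) else (t - 2*(j-1)) + t*k

def LastO (t k j : ℕ) : ℕ :=
  if j % 2 = 1 then 2*(j-1)+1 else (2*(j-1)+1) + t*k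

lemma evenRun_zero (t k : ℕ) : evenRun t k 0 = (List.range (k+2)).map (fun i => 0 + t*i) := by
  simp [evenRun]

lemma evenRun_odd (t k j : ℕ) (hj : j % 2 = 1) :
    evenRun t k j = (List.range (k+1)).map (fun i => (t - 2*j) + t*(k-i)) := by
  have h0 : j ≠ 0 := by omega
  simp [evenRun, h0, hj]

lemma evenRun_even (t k j : ℕ) (h0 : j ≠ 0) (hj : j % 2 = 0) :
    evenRun t k j = (List.range (k+1)).map (fun i => (t - 2*j) + t*i) := by
  simp [evenRun, h0, hj]

lemma oddRun_even (t k j : ℕ) (hj : j % 2 = 0) :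
    oddRun t k j = (List.range (k+1)).map (fun i => (2*j+1) + t*(k-i)) := by
  simp [oddRun, hj]

lemma oddRun_odd (t k j : ℕ) (hj : j % 2 = 1) :
    oddRun t k j = (List.range (k+1)).map (fun i => (2*j+1) + t*i) := by
  have : ¬ (j % 2 = 0) := by omega
  simp [oddRun, this]

set_option maxHeartbeats 1000000 in
lemma evenSpec (t k m : ℕ) (ht : t = 2*m) (hm : 3 ≤ m) :
    ∀ j, 1 ≤ j → j ≤ m →
    pathDiffs (((List.range j).map (evenRun t k)).flatten)
        = Multiset.replicate (j*k+1) t + Multiset.replicate (j-1) 2 ∧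
    (((List.range j).map (evenRun t k)).flatten).getLast? = some (LastE t k j) ∧
    (((List.range j).map (evenRun t k)).flatten).length = j*(k+1) + 1 ∧
    (((List.range j).map (evenRun t k)).flatten).Nodup ∧
    ∀ x ∈ ((List.range j).map (evenRun t k)).flatten,
      x ≤ t*k + t ∧ x % t % 2 = 0 ∧ (x % t = 0 ∨ t + 2 ≤ x % t + 2*j) := by
  have htpos : 0 < t := by omega
  intro j
  induction j with
  | zero => intro h; omega
  | succ j ih =>
    intro _ hle
    by_cases hj0 : j = 0
    · subst hj0
      rw [flatten_step]
      have h0 : ((List.range 0).map (evenRun t k)).flatten = [] := rfl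
      rw [h0, List.nil_append, evenRun_zero]
      obtain ⟨s1, s2, s3, s4, s5, s6⟩ := ascSpec t 0 (k+1) htpos
      refine ⟨?_, ?_, ?_, s5, ?_⟩
      · rw [s1]; simp
      · rw [s3]; simp [LastE]
      · rw [s4]; ring
      · intro x hx
        obtain ⟨i, hi, rfl⟩ := s6 x hx
        refine ⟨?_, ?_, ?_⟩
        · have : t * i ≤ t * (k+1) := Nat.mul_le_mul_left t hi
          rw [mul_add, mul_one] at this; omega
        · simp [Nat.add_mul_mod_self_left]
        · left; simp [Nat.add_mul_mod_self_left]
    · have hj1 : 1 ≤ j := by omega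
      obtain ⟨hpd, hlast, hlen, hnd, hmem⟩ := ih hj1 (by omega)
      have hjm : 2*j + 2 ≤ t := by omega
      have hstep := flatten_step (evenRun t k) j
      rcases Nat.mod_two_eq_zero_or_one j with hj2 | hj2
      · -- j even, run ascending
        obtain ⟨s1, s2, s3, s4, s5, s6⟩ := ascSpec t (t - 2*j) k htpos
        rw [evenRun_even t k j hj0 hj2] at hstep
        have hLE : LastE t k j = (t - 2*j) + 2 := by
          have hne : j ≠ 1 := by omega
          simp [LastE, hne, hj2]; omega
        have hjunc : max (LastE t k j) (t - 2*j) - min (LastE t k j) (t - 2*j) = 2 := by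
          rw [hLE]; exact fdiff_left (t - 2*j) 2
        refine ⟨?_, ?_, ?_, ?_, ?_⟩
        · rw [hstep, pd_append2 _ _ _ _ hlast s2, hjunc, hpd, s1]
          have e1 : (j+1)*k+1 = (j*k+1) + k := by ring
          have e2 : (j+1)-1 = (j-1) + 1 := by omega
          rw [e1, e2]
          exact rep_merge t 2 (by omega) _ _ _
        · rw [hstep, getLast?_append_of _ _ _ s3]
          have h1 : j + 1 ≠ 1 := by omega
          have h2 : (j+1) % 2 = 1 := by omega
          have h3 : ¬ ((j+1) % 2 = 0) := by omega
          simp [LastE, h1, h3, hj0]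
        · rw [hstep, List.length_append, hlen, s4]; ring
        · rw [hstep, List.nodup_append']
          refine ⟨hnd, s5, ?_⟩
          intro x hxE hxR
          obtain ⟨hb, he, ho⟩ := hmem x hxE
          obtain ⟨i, hi, rfl⟩ := s6 x hxR
          have hr : ((t - 2*j) + t*i) % t = t - 2*j := by
            rw [Nat.add_mul_mod_self_left, Nat.mod_eq_of_lt (by omega)]
          omega
        · intro x hx
          rw [hstep, List.mem_append] at hx
          rcases hx with hx | hx
          · obtain ⟨hb, he, ho⟩ := hmem x hx
            exact ⟨hb, he, by omega⟩
          · obtain ⟨i, hi, rfl⟩ := s6 x hx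
            have hr : ((t - 2*j) + t*i) % t = t - 2*j := by
              rw [Nat.add_mul_mod_self_left, Nat.mod_eq_of_lt (by omega)]
            have : t * i ≤ t * k := Nat.mul_le_mul_left t hi
            exact ⟨by omega, by omega, by omega⟩
      · -- j odd, run descending
        obtain ⟨s1, s2, s3, s4, s5, s6⟩ := descSpec t (t - 2*j) k htpos
        rw [evenRun_odd t k j hj2] at hstep
        have hjunc : max (LastE t k j) ((t - 2*j) + t*k)
            - min (LastE t k j) ((t - 2*j) + t*k) = 2 := by
          by_cases hj1' : j = 1
          · subst hj1'
            have hLE : LastE t k 1 = ((t - 2*1) + t*k) + 2 := by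
              have e : t * (k+1) = ((t - 2*1) + t*k) + 2 := by
                have hc2 : (t - 2*1) + 2 = t := by omega
                calc t * (k+1) = t*k + t := by ring
                  _ = t*k + ((t - 2*1) + 2) := by rw [hc2]
                  _ = ((t - 2*1) + t*k) + 2 := by ring
              simp [LastE, e]
            rw [hLE]; exact fdiff_left ((t - 2*1) + t*k) 2
          · have hLE : LastE t k j = ((t - 2*j) + t*k) + 2 := by
              have h2 : ¬ (j % 2 = 0) := by omega
              simp only [LastE, if_neg hj1', if_neg h2]
              have : t - 2*(j-1) = (t - 2*j) + 2 := by omega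
              rw [this]; ring
            rw [hLE]; exact fdiff_left ((t - 2*j) + t*k) 2
        refine ⟨?_, ?_, ?_, ?_, ?_⟩
        · rw [hstep, pd_append2 _ _ _ _ hlast s2, hjunc, hpd, s1]
          have e1 : (j+1)*k+1 = (j*k+1) + k := by ring
          have e2 : (j+1)-1 = (j-1) + 1 := by omega
          rw [e1, e2]
          exact rep_merge t 2 (by omega) _ _ _
        · rw [hstep, getLast?_append_of _ _ _ s3]
          have h1 : j + 1 ≠ 1 := by omega
          have h2 : (j+1) % 2 = 0 := by omega
          simp [LastE, h1, h2, hj0]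
        · rw [hstep, List.length_append, hlen, s4]; ring
        · rw [hstep, List.nodup_append']
          refine ⟨hnd, s5, ?_⟩
          intro x hxE hxR
          obtain ⟨hb, he, ho⟩ := hmem x hxE
          obtain ⟨i, hi, rfl⟩ := s6 x hxR
          have hr : ((t - 2*j) + t*i) % t = t - 2*j := by
            rw [Nat.add_mul_mod_self_left, Nat.mod_eq_of_lt (by omega)]
          omega
        · intro x hx
          rw [hstep, List.mem_append] at hx
          rcases hx with hx | hx
          · obtain ⟨hb, he, ho⟩ := hmem x hx
            exact ⟨hb, he, by omega⟩
          · obtain ⟨i, hi, rfl⟩ := s6 x hx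
            have hr : ((t - 2*j) + t*i) % t = t - 2*j := by
              rw [Nat.add_mul_mod_self_left, Nat.mod_eq_of_lt (by omega)]
            have : t * i ≤ t * k := Nat.mul_le_mul_left t hi
            exact ⟨by omega, by omega, by omega⟩

set_option maxHeartbeats 1000000 in
lemma oddSpec (t k m : ℕ) (ht : t = 2*m) (hm : 3 ≤ m) :
    ∀ j, 1 ≤ j → j ≤ m →
    pathDiffs (((List.range j).map (oddRun t k)).flatten)
        = Multiset.replicate (j*k) t + Multiset.replicate (j-1) 2 ∧
    (((List.range j).map (oddRun t k)).flatten).head? = some (1 + t*k) ∧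
    (((List.range j).map (oddRun t k)).flatten).getLast? = some (LastO t k j) ∧
    (((List.range j).map (oddRun t k)).flatten).length = j*(k+1) ∧
    (((List.range j).map (oddRun t k)).flatten).Nodup ∧
    ∀ x ∈ ((List.range j).map (oddRun t k)).flatten,
      x ≤ t*k + t ∧ x % t % 2 = 1 ∧ x % t < 2*j := by
  have htpos : 0 < t := by omega
  intro j
  induction j with
  | zero => intro h; omega
  | succ j ih =>
    intro _ hle
    by_cases hj0 : j = 0
    · subst hj0
      rw [flatten_step]
      have h0 : ((List.range 0).map (oddRun t k)).flatten = [] := rfl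
      rw [h0, List.nil_append, oddRun_even t k 0 rfl]
      obtain ⟨s1, s2, s3, s4, s5, s6⟩ := descSpec t (2*0+1) k htpos
      refine ⟨?_, ?_, ?_, ?_, s5, ?_⟩
      · rw [s1]; simp
      · simpa using s2
      · rw [s3]; simp [LastO]
      · rw [s4]; ring
      · intro x hx
        obtain ⟨i, hi, rfl⟩ := s6 x hx
        have hr : ((2*0+1) + t*i) % t = 1 := by
          rw [Nat.add_mul_mod_self_left]
          norm_num
          exact Nat.mod_eq_of_lt (by omega)
        have : t * i ≤ t * k := Nat.mul_le_mul_left t hi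
        exact ⟨by omega, by omega, by omega⟩
    · have hj1 : 1 ≤ j := by omega
      obtain ⟨hpd, hhead, hlast, hlen, hnd, hmem⟩ := ih hj1 (by omega)
      have hjm : 2*j + 1 < t := by omega
      have hstep := flatten_step (oddRun t k) j
      rcases Nat.mod_two_eq_zero_or_one j with hj2 | hj2
      · -- j even (≥2), run descending
        obtain ⟨s1, s2, s3, s4, s5, s6⟩ := descSpec t (2*j+1) k htpos
        rw [oddRun_even t k j hj2] at hstep
        have hjunc : max (LastO t k j) ((2*j+1) + t*k)
            - min (LastO t k j) ((2*j+1) + t*k) = 2 := by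
          have hLO : (2*j+1) + t*k = LastO t k j + 2 := by
            have h2 : ¬ (j % 2 = 1) := by omega
            simp only [LastO, if_neg h2]
            have : 2*j+1 = (2*(j-1)+1) + 2 := by omega
            rw [this]; ring
          rw [hLO, max_comm, min_comm]; exact fdiff_left (LastO t k j) 2
        refine ⟨?_, ?_, ?_, ?_, ?_, ?_⟩
        · rw [hstep, pd_append2 _ _ _ _ hlast s2, hjunc, hpd, s1]
          have e1 : (j+1)*k = (j*k) + k := by ring
          have e2 : (j+1)-1 = (j-1) + 1 := by omega
          rw [e1, e2]
          exact rep_merge t 2 (by omega) _ _ _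
        · rw [hstep, head?_append_of _ _ _ hhead]
        · rw [hstep, getLast?_append_of _ _ _ s3]
          have h2 : (j+1) % 2 = 1 := by omega
          simp [LastO, h2]
        · rw [hstep, List.length_append, hlen, s4]; ring
        · rw [hstep, List.nodup_append']
          refine ⟨hnd, s5, ?_⟩
          intro x hxE hxR
          obtain ⟨hb, he, ho⟩ := hmem x hxE
          obtain ⟨i, hi, rfl⟩ := s6 x hxR
          have hr : ((2*j+1) + t*i) % t = 2*j+1 := by
            rw [Nat.add_mul_mod_self_left, Nat.mod_eq_of_lt (by omega)]
          omega
        · intro x hx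
          rw [hstep, List.mem_append] at hx
          rcases hx with hx | hx
          · obtain ⟨hb, he, ho⟩ := hmem x hx
            exact ⟨hb, he, by omega⟩
          · obtain ⟨i, hi, rfl⟩ := s6 x hx
            have hr : ((2*j+1) + t*i) % t = 2*j+1 := by
              rw [Nat.add_mul_mod_self_left, Nat.mod_eq_of_lt (by omega)]
            have : t * i ≤ t * k := Nat.mul_le_mul_left t hi
            exact ⟨by omega, by omega, by omega⟩
      · -- j odd, run ascending
        obtain ⟨s1, s2, s3, s4, s5, s6⟩ := ascSpec t (2*j+1) k htpos
        rw [oddRun_odd t k j hj2] at hstep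
        have hjunc : max (LastO t k j) (2*j+1) - min (LastO t k j) (2*j+1) = 2 := by
          have hLO : 2*j+1 = LastO t k j + 2 := by
            simp only [LastO, if_pos hj2]
            omega
          rw [hLO, max_comm, min_comm]; exact fdiff_left (LastO t k j) 2
        refine ⟨?_, ?_, ?_, ?_, ?_, ?_⟩
        · rw [hstep, pd_append2 _ _ _ _ hlast s2, hjunc, hpd, s1]
          have e1 : (j+1)*k = (j*k) + k := by ring
          have e2 : (j+1)-1 = (j-1) + 1 := by omega
          rw [e1, e2]
          exact rep_merge t 2 (by omega) _ _ _
        · rw [hstep, head?_append_of _ _ _ hhead]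
        · rw [hstep, getLast?_append_of _ _ _ s3]
          have h2 : ¬ ((j+1) % 2 = 1) := by omega
          simp [LastO, h2]
        · rw [hstep, List.length_append, hlen, s4]; ring
        · rw [hstep, List.nodup_append']
          refine ⟨hnd, s5, ?_⟩
          intro x hxE hxR
          obtain ⟨hb, he, ho⟩ := hmem x hxE
          obtain ⟨i, hi, rfl⟩ := s6 x hxR
          have hr : ((2*j+1) + t*i) % t = 2*j+1 := by
            rw [Nat.add_mul_mod_self_left, Nat.mod_eq_of_lt (by omega)]
          omega
        · intro x hx
          rw [hstep, List.mem_append] at hx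
          rcases hx with hx | hx
          · obtain ⟨hb, he, ho⟩ := hmem x hx
            exact ⟨hb, he, by omega⟩
          · obtain ⟨i, hi, rfl⟩ := s6 x hx
            have hr : ((2*j+1) + t*i) % t = 2*j+1 := by
              rw [Nat.add_mul_mod_self_left, Nat.mod_eq_of_lt (by omega)]
            have : t * i ≤ t * k := Nat.mul_le_mul_left t hi
            exact ⟨by omega, by omega, by omega⟩

end Helpers

theorem stmt18 (t k : ℕ) (h6 : 6 ≤ t) (hmod : t % 4 = 2) :
    IsLinReal ({1} + Multiset.replicate (t-2) 2 + Multiset.replicate (t*k+1) t)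
      (zigzagPath t k) := by
  obtain ⟨m, ht, hmo⟩ : ∃ m, t = 2*m ∧ m % 2 = 1 := ⟨t/2, by omega, by omega⟩
  have hm : 3 ≤ m := by omega
  have htm : t / 2 = m := by omega
  obtain ⟨hpdE, hlastE, hlenE, hndE, hmemE⟩ := evenSpec t k m ht hm m (by omega) le_rfl
  obtain ⟨hpdO, hheadO, hlastO, hlenO, hndO, hmemO⟩ := oddSpec t k m ht hm m (by omega) le_rfl
  have hzig : zigzagPath t k =
      ((List.range m).map (evenRun t k)).flatten ++ ((List.range m).map (oddRun t k)).flatten := by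
    rw [zigzagPath, htm]
  have hcard : Multiset.card ({1} + Multiset.replicate (t-2) 2 + Multiset.replicate (t*k+1) t)
      = t*k + t := by
    simp [Multiset.card_replicate]
    omega
  have hjunc : max (LastE t k m) (1 + t*k) - min (LastE t k m) (1 + t*k) = 1 := by
    have hne : m ≠ 1 := by omega
    have h2 : ¬ (m % 2 = 0) := by omega
    have hLE : LastE t k m = (1 + t*k) + 1 := by
      simp only [LastE, if_neg hne, if_neg h2]
      have : t - 2*(m-1) = 2 := by omega
      rw [this]; ring
    rw [hLE]; exact fdiff_left (1 + t*k) 1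
  constructor
  · -- permutation
    rw [hcard, hzig]
    have hlen : (((List.range m).map (evenRun t k)).flatten
        ++ ((List.range m).map (oddRun t k)).flatten).length = t*k + t + 1 := by
      rw [List.length_append, hlenE, hlenO, ht]; ring
    have hnd : (((List.range m).map (evenRun t k)).flatten
        ++ ((List.range m).map (oddRun t k)).flatten).Nodup := by
      rw [List.nodup_append']
      refine ⟨hndE, hndO, ?_⟩
      intro x hxE hxO
      obtain ⟨_, he, _⟩ := hmemE x hxE
      obtain ⟨_, ho, _⟩ := hmemO x hxO
      omega
    have hbound : ∀ x ∈ ((List.range m).map (evenRun t k)).flatten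
        ++ ((List.range m).map (oddRun t k)).flatten, x < t*k + t + 1 := by
      intro x hx
      rw [List.mem_append] at hx
      rcases hx with hx | hx
      · have := (hmemE x hx).1; omega
      · have := (hmemO x hx).1; omega
    rw [← Multiset.coe_eq_coe]
    have hle : (↑(((List.range m).map (evenRun t k)).flatten
        ++ ((List.range m).map (oddRun t k)).flatten) : Multiset ℕ)
        ≤ ↑(List.range (t*k + t + 1)) := by
      rw [Multiset.le_iff_subset (Multiset.coe_nodup.mpr hnd)]
      intro x hx
      rw [Multiset.mem_coe, List.mem_range]
      exact hbound x (Multiset.mem_coe.mp hx)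
    refine Multiset.eq_of_le_of_card_le hle ?_
    rw [Multiset.coe_card, Multiset.coe_card, hlen, List.length_range]
  · -- path differences
    rw [hzig, pd_append2 _ _ _ _ hlastE hheadO, hjunc, hpdE, hpdO]
    have e1 : t - 2 = (m-1) + (m-1) := by omega
    have e2 : t*k+1 = (m*k+1) + (m*k) := by rw [ht]; ring
    rw [e1, e2]
    exact rep_final t 2 1 (m*k+1) (m-1) (m*k) (by omega) (by omega) (by omega)
end
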